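/- arXiv:1905.07517 — 5 statements merged into one kernel-verified Lean document; each statement's English description precedes it below -/
import Mathlib

section
/- Let S = K[x_1,...,x_n], F a free S-module, M = Sf_1 + ... + Sf_s ⊆ F, and ≺ a monomial order on F with extension ≺' to F^h = S[t]e_1 ⊕ ... ⊕ S[t]e_m (comparing first by total degree including t, then by ≺ on dehomogenized monomials). If N is a graded submodule of F^h with S[t]f_1^h + ... + S[t]f_s^h ⊆ N ⊆ M^h, and G is a homogeneous Gröbner basis of N with respect to ≺', then the dehomogenization G^{deh} (setting t = 1) is a Gröbner basis of M with respect to ≺. -/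
open MvPolynomial

noncomputable section

variable (K : Type*) [Field K]

/-- The free module `F = S e₁ ⊕ ⋯ ⊕ S eₘ` over `S = K[x₁,…,xₙ]`, realized as `Fin m → S`. -/
abbrev FreeMod (n m : ℕ) := Fin m → MvPolynomial (Fin n) K

/-- The monomial `x^d · e_j` of the free module. -/
def mval {n m : ℕ} (p : Fin m × (Fin n →₀ ℕ)) : FreeMod K n m :=
  Pi.single p.1 (monomial p.2 (1 : K))

/-- Degree of the monomial `x^d e_j` relative to basis degrees `e`. -/
def mdeg {n m : ℕ} (e : Fin m → ℕ) (p : Fin m × (Fin n →₀ ℕ)) : ℕ :=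
  (p.2.sum fun _ k => k) + e p.1

/-- The degree-`z` homogeneous component of the graded free module (as a `K`-subspace). -/
def degComp (n m : ℕ) (e : Fin m → ℕ) (z : ℕ) : Submodule K (FreeMod K n m) :=
  Submodule.span K { f | ∃ p : Fin m × (Fin n →₀ ℕ), mdeg e p = z ∧ f = mval K p }

/-- The cone `h·K[u]`: the `K`-span of the products of `h` with monomials in the variables `u`. -/
def cone {n m : ℕ} (h : FreeMod K n m) (u : Set (Fin n)) : Submodule K (FreeMod K n m) :=
  Submodule.span K
    { f | ∃ d : Fin n →₀ ℕ, ↑d.support ⊆ u ∧ f = (monomial d (1 : K)) • h }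

/-- Data of a cone: a pivot, a set of variables, and the degree of the pivot. -/
abbrev ConeData (K : Type*) [Field K] (n m : ℕ) :=
  (FreeMod K n m) × Finset (Fin n) × ℕ

/-- `P` is a cone decomposition of the `K`-subspace `T ⊆ F`: pivots are nonzero homogeneous
of the recorded degree, and `T` is the internal direct sum of the cones of `P`. -/
def IsConeDecomp {n m : ℕ} (e : Fin m → ℕ) (P : Finset (ConeData K n m))
    (T : Submodule K (FreeMod K n m)) : Prop :=
  (∀ c ∈ P, c.1 ≠ 0 ∧ c.1 ∈ degComp K n m e c.2.2) ∧
  iSupIndep (fun c : P => cone K c.1.1 ↑c.1.2.1) ∧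
  (⨆ c : P, cone K c.1.1 ↑c.1.2.1) = T

/-- `P` is `q`-standard. -/
def IsStandard {n m : ℕ} (q : ℕ) (P : Finset (ConeData K n m)) : Prop :=
  (∀ c ∈ P, 0 < c.2.1.card → q ≤ c.2.2) ∧
  (∀ c ∈ P, 0 < c.2.1.card → ∀ d, q ≤ d → d ≤ c.2.2 →
    ∃ c' ∈ P, c'.2.2 = d ∧ c.2.1.card ≤ c'.2.1.card)

/-- `P` is `q`-exact: `q`-standard and the positive-dimensional cones have distinct degrees. -/
def IsExact {n m : ℕ} (q : ℕ) (P : Finset (ConeData K n m)) : Prop :=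
  IsStandard K q P ∧
  ∀ c ∈ P, ∀ c' ∈ P, 0 < c.2.1.card → 0 < c'.2.1.card → c ≠ c' → c.2.2 ≠ c'.2.2

/-- The Macaulay constants `b k = max({q} ∪ {1 + deg C : C ∈ P, dim C ≥ k})`. -/
def macaulay {n m : ℕ} (q : ℕ) (P : Finset (ConeData K n m)) (k : ℕ) : ℕ :=
  max q ((P.filter fun c => k ≤ c.2.1.card).sup fun c => c.2.2 + 1)

/-- The Hilbert function of a graded `K`-subspace `T ⊆ F`. -/
def hilb {n m : ℕ} (e : Fin m → ℕ) (T : Submodule K (FreeMod K n m)) (z : ℕ) : ℕ :=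
  Module.finrank K ↥(T ⊓ degComp K n m e z)

/-- The set of monomials (with their positions) appearing in `f ∈ F`. -/
def suppM {n m : ℕ} (f : FreeMod K n m) : Finset (Fin m × (Fin n →₀ ℕ)) :=
  Finset.univ.biUnion fun j => (f j).support.image fun d => (j, d)

/-- `p` is the leading monomial of `f` with respect to the monomial order `mo`. -/
def IsLM {n m : ℕ} (mo : LinearOrder (Fin m × (Fin n →₀ ℕ))) (f : FreeMod K n m)
    (p : Fin m × (Fin n →₀ ℕ)) : Prop :=
  p ∈ suppM K f ∧ ∀ p' ∈ suppM K f, mo.le p' p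

/-- The initial module of `M` w.r.t. the monomial order `mo`. -/
def initMod {n m : ℕ} (mo : LinearOrder (Fin m × (Fin n →₀ ℕ)))
    (M : Submodule (MvPolynomial (Fin n) K) (FreeMod K n m)) :
    Submodule (MvPolynomial (Fin n) K) (FreeMod K n m) :=
  Submodule.span _ { f | ∃ g ∈ M, ∃ p, IsLM K mo g p ∧ f = mval K p }

/-- `G` is a Gröbner basis of `M` w.r.t. `mo`. -/
def IsGB {n m : ℕ} (mo : LinearOrder (Fin m × (Fin n →₀ ℕ)))
    (G : Set (FreeMod K n m))
    (M : Submodule (MvPolynomial (Fin n) K) (FreeMod K n m)) : Prop :=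
  G ⊆ M ∧
  Submodule.span (MvPolynomial (Fin n) K)
      { f | ∃ g ∈ G, ∃ p, IsLM K mo g p ∧ f = mval K p } = initMod K mo M

/-- `mo` is a monomial order: compatible with multiplication and monomials of `S` are ≻ 1. -/
def IsMonomialOrder {n m : ℕ} (mo : LinearOrder (Fin m × (Fin n →₀ ℕ))) : Prop :=
  (∀ a b : Fin m × (Fin n →₀ ℕ), ∀ γ : Fin n →₀ ℕ,
      mo.lt a b → mo.lt (a.1, a.2 + γ) (b.1, b.2 + γ)) ∧
  (∀ (j : Fin m) (α γ : Fin n →₀ ℕ), γ ≠ 0 → mo.lt (j, α) (j, α + γ))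

/-- `G` is the reduced Gröbner basis of `M` w.r.t. `mo`. -/
def IsReducedGB {n m : ℕ} (mo : LinearOrder (Fin m × (Fin n →₀ ℕ)))
    (G : Set (FreeMod K n m))
    (M : Submodule (MvPolynomial (Fin n) K) (FreeMod K n m)) : Prop :=
  IsGB K mo G M ∧ (0 : FreeMod K n m) ∉ G ∧
  (∀ g ∈ G, ∀ p, IsLM K mo g p → (g p.1).coeff p.2 = 1) ∧
  (∀ g ∈ G, ∀ g' ∈ G, g ≠ g' → ∀ q ∈ suppM K g, ∀ p, IsLM K mo g' p →
    ¬ (p.1 = q.1 ∧ p.2 ≤ q.2))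

/-- The zeroth Fitting ideal of `F/M`: the ideal of `m × m` minors of a presentation matrix,
equivalently generated by determinants of matrices whose columns lie in `M`. -/
def fitt0 {n m : ℕ} (M : Submodule (MvPolynomial (Fin n) K) (FreeMod K n m)) :
    Ideal (MvPolynomial (Fin n) K) :=
  Ideal.span { p | ∃ A : Matrix (Fin m) (Fin m) (MvPolynomial (Fin n) K),
    (∀ i, (fun j => A j i) ∈ M) ∧ p = A.det }

end

noncomputable section

variable (K : Type*) [Field K]

/-- The degree of an element `f` of the free module (max degree of its monomials). -/
def fdeg {n m : ℕ} (e : Fin m → ℕ) (f : FreeMod K n m) : ℕ :=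
  (suppM K f).sup (mdeg e)

/-- Homogenization `f^h` of `f` with respect to a new variable `t` (the last variable). -/
def homogenize {n m : ℕ} (e : Fin m → ℕ) (f : FreeMod K n m) : FreeMod K (n + 1) m :=
  fun j => (AddMonoidAlgebra.coeff (f j)).sum fun dd c =>
    monomial (dd.mapDomain Fin.castSucc +
      Finsupp.single (Fin.last n) (fdeg K e f - ((dd.sum fun _ k => k) + e j))) c

/-- Dehomogenization of an element of `F^h` (substituting `t = 1`). -/
def dehomM {n m : ℕ} (f : FreeMod K (n + 1) m) : FreeMod K n m :=
  fun j => aeval (Fin.snoc MvPolynomial.X (1 : MvPolynomial (Fin n) K)) (f j)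

/-- Dehomogenization of a monomial position `(j, d)` of `F^h` (dropping the `t`-exponent). -/
def dehomMon {n m : ℕ} (p : Fin m × (Fin (n + 1) →₀ ℕ)) : Fin m × (Fin n →₀ ℕ) :=
  (p.1, Finsupp.comapDomain Fin.castSucc p.2 (Fin.castSucc_injective n).injOn)

end

noncomputable section StmtHelpers

open MvPolynomial

namespace St3

variable {K : Type*} [Field K] {n m : ℕ}

/-- Sum of values of a finitely supported exponent vector (the degree of the monomial). -/
abbrev degS {k : ℕ} (d : Fin k →₀ ℕ) : ℕ := d.sum fun _ k => k

/-- Dehomogenization of an exponent vector. -/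
def dexp {n : ℕ} (d : Fin (n + 1) →₀ ℕ) : Fin n →₀ ℕ :=
  Finsupp.comapDomain Fin.castSucc d (Fin.castSucc_injective n).injOn

theorem dexp_apply (d : Fin (n + 1) →₀ ℕ) (i : Fin n) : dexp d i = d i.castSucc := rfl

theorem dehomMon_def (p : Fin m × (Fin (n + 1) →₀ ℕ)) : dehomMon p = (p.1, dexp p.2) := rfl

theorem dexp_add (a b : Fin (n + 1) →₀ ℕ) : dexp (a + b) = dexp a + dexp b := by
  ext i; simp [dexp_apply]

theorem dexp_mapDomain (u : Fin n →₀ ℕ) :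
    dexp (Finsupp.mapDomain Fin.castSucc u) = u := by
  ext i
  rw [dexp_apply, Finsupp.mapDomain_apply (Fin.castSucc_injective n)]

theorem last_not_range_castSucc : Fin.last n ∉ Set.range (Fin.castSucc : Fin n → Fin (n + 1)) := by
  rintro ⟨i, hi⟩
  exact (Fin.castSucc_lt_last i).ne hi

theorem dexp_single_last (k : ℕ) : dexp (Finsupp.single (Fin.last n) k) = 0 := by
  ext i
  rw [dexp_apply, Finsupp.single_apply, if_neg (Fin.castSucc_lt_last i).ne']
  rfl

theorem degS_sum_univ {k : ℕ} (d : Fin k →₀ ℕ) : degS d = ∑ i, d i :=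
  Finsupp.sum_fintype _ _ fun _ => rfl

theorem degS_decomp (d : Fin (n + 1) →₀ ℕ) :
    degS d = degS (dexp d) + d (Fin.last n) := by
  rw [degS_sum_univ, degS_sum_univ, Fin.sum_univ_castSucc]
  rfl

theorem dexp_injOn {d1 d2 : Fin (n + 1) →₀ ℕ} (hdeg : degS d1 = degS d2)
    (h : dexp d1 = dexp d2) : d1 = d2 := by
  have hlast : d1 (Fin.last n) = d2 (Fin.last n) := by
    have e1 := degS_decomp d1
    have e2 := degS_decomp d2
    rw [h] at e1
    omega
  ext i
  induction i using Fin.lastCases with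
  | last => exact hlast
  | cast i =>
      have := congrArg (fun v => v i) h
      simpa [dexp_apply] using this

theorem finsupp_decomp (d : Fin (n + 1) →₀ ℕ) :
    d = Finsupp.mapDomain Fin.castSucc (dexp d) +
      Finsupp.single (Fin.last n) (d (Fin.last n)) := by
  ext i
  induction i using Fin.lastCases with
  | last =>
      rw [Finsupp.add_apply, Finsupp.mapDomain_notin_range _ _ last_not_range_castSucc,
        Finsupp.single_eq_same, zero_add]
  | cast i =>
      rw [Finsupp.add_apply, Finsupp.mapDomain_apply (Fin.castSucc_injective n),
        dexp_apply, Finsupp.single_apply, if_neg (Fin.castSucc_lt_last i).ne', add_zero]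

/-- The exponent map used in homogenization to level `D` with basis-degree shift `c0`. -/
def genφ {n : ℕ} (D c0 : ℕ) (dd : Fin n →₀ ℕ) : Fin (n + 1) →₀ ℕ :=
  Finsupp.mapDomain Fin.castSucc dd +
    Finsupp.single (Fin.last n) (D - (degS dd + c0))

theorem dexp_genφ (D c0 : ℕ) (dd : Fin n →₀ ℕ) : dexp (genφ D c0 dd) = dd := by
  rw [genφ, dexp_add, dexp_mapDomain, dexp_single_last, add_zero]

theorem degS_single {k : ℕ} (a : Fin k) (x : ℕ) : degS (Finsupp.single a x) = x :=
  Finsupp.sum_single_index rfl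

theorem degS_add {k : ℕ} (a b : Fin k →₀ ℕ) : degS (a + b) = degS a + degS b :=
  Finsupp.sum_add_index' (fun _ => rfl) (fun _ _ _ => rfl)

theorem degS_mapDomain (u : Fin n →₀ ℕ) :
    degS (Finsupp.mapDomain Fin.castSucc u) = degS u := by
  have h := degS_decomp (Finsupp.mapDomain Fin.castSucc u)
  rw [dexp_mapDomain, Finsupp.mapDomain_notin_range _ _ last_not_range_castSucc] at h
  omega

theorem degS_genφ (D c0 : ℕ) (dd : Fin n →₀ ℕ) :
    degS (genφ D c0 dd) = degS dd + (D - (degS dd + c0)) := by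
  rw [genφ, degS_add, degS_mapDomain, degS_single]

/-- Mapping monomials of a polynomial along an exponent map. -/
def mapMon {a b : ℕ} (ψ : (Fin a →₀ ℕ) → (Fin b →₀ ℕ)) :
    MvPolynomial (Fin a) K →+ MvPolynomial (Fin b) K where
  toFun p := (AddMonoidAlgebra.coeff p).sum fun d c => monomial (ψ d) c
  map_zero' := by
    show Finsupp.sum (0 : (Fin a →₀ ℕ) →₀ K) (fun d c => (monomial (ψ d) c : MvPolynomial (Fin b) K)) = 0
    exact Finsupp.sum_zero_index
  map_add' p q := by
    show Finsupp.sum (AddMonoidAlgebra.coeff p + AddMonoidAlgebra.coeff q)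
      (fun d c => (monomial (ψ d) c : MvPolynomial (Fin b) K)) = _
    exact Finsupp.sum_add_index' (fun d => monomial_zero)
      (fun d c1 c2 => (monomial (ψ d)).map_add c1 c2)

theorem mapMon_monomial {a b : ℕ} (ψ : (Fin a →₀ ℕ) → (Fin b →₀ ℕ))
    (d : Fin a →₀ ℕ) (c : K) : mapMon ψ (monomial d c) = monomial (ψ d) c := by
  show (AddMonoidAlgebra.coeff (monomial d c)).sum (fun d c => monomial (ψ d) c) = monomial (ψ d) c
  rw [← single_eq_monomial, AddMonoidAlgebra.coeff_single, Finsupp.sum_single_index]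
  exact monomial_zero

theorem mapMon_eq_sum {a b : ℕ} (ψ : (Fin a →₀ ℕ) → (Fin b →₀ ℕ)) (p : MvPolynomial (Fin a) K) :
    mapMon ψ p = ∑ d ∈ p.support, monomial (ψ d) (coeff d p) := rfl

theorem coeff_mapMon {a b : ℕ} (ψ : (Fin a →₀ ℕ) → (Fin b →₀ ℕ)) (p : MvPolynomial (Fin a) K)
    (u : Fin b →₀ ℕ) :
    coeff u (mapMon ψ p) = ∑ d ∈ p.support.filter (fun d => ψ d = u), coeff d p := by
  classical
  rw [mapMon_eq_sum, coeff_sum, Finset.sum_filter]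
  exact Finset.sum_congr rfl fun d _ => coeff_monomial _ _ _

theorem coeff_mapMon_of_injOn {a b : ℕ} {ψ : (Fin a →₀ ℕ) → (Fin b →₀ ℕ)}
    {p : MvPolynomial (Fin a) K} (hinj : Set.InjOn ψ p.support)
    {d : Fin a →₀ ℕ} (hd : d ∈ p.support) :
    coeff (ψ d) (mapMon ψ p) = coeff d p := by
  classical
  rw [coeff_mapMon]
  rw [show p.support.filter (fun d' => ψ d' = ψ d) = {d} from ?_, Finset.sum_singleton]
  ext d'
  simp only [Finset.mem_filter, Finset.mem_singleton]
  constructor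
  · rintro ⟨hd', he⟩; exact hinj hd' hd he
  · rintro rfl; exact ⟨hd, rfl⟩

theorem exists_of_coeff_mapMon_ne_zero {a b : ℕ} {ψ : (Fin a →₀ ℕ) → (Fin b →₀ ℕ)}
    {p : MvPolynomial (Fin a) K} {u : Fin b →₀ ℕ} (h : coeff u (mapMon ψ p) ≠ 0) :
    ∃ d ∈ p.support, ψ d = u := by
  classical
  by_contra hc
  push_neg at hc
  apply h
  rw [coeff_mapMon, Finset.filter_false_of_mem (fun d hd => hc d hd), Finset.sum_empty]

theorem dehomP_monomial (d : Fin (n + 1) →₀ ℕ) (c : K) :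
    aeval (Fin.snoc X (1 : MvPolynomial (Fin n) K)) (monomial d c) = monomial (dexp d) c := by
  rw [show (monomial d c : MvPolynomial (Fin (n + 1)) K)
      = monomial (Finsupp.mapDomain Fin.castSucc (dexp d)) c *
        monomial (Finsupp.single (Fin.last n) (d (Fin.last n))) 1 from by
    rw [monomial_mul, mul_one, ← finsupp_decomp]]
  rw [map_mul, ← rename_monomial, aeval_rename,
    show (Fin.snoc X (1 : MvPolynomial (Fin n) K)) ∘ Fin.castSucc = X from
      funext fun i => Fin.snoc_castSucc _ _ _,
    aeval_X_left_apply, aeval_monomial, map_one, one_mul,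
    Finsupp.prod_single_index, Fin.snoc_last, one_pow, mul_one]
  exact pow_zero _

theorem dehomP_eq (q : MvPolynomial (Fin (n + 1)) K) :
    aeval (Fin.snoc X (1 : MvPolynomial (Fin n) K)) q = mapMon dexp q := by
  conv_lhs => rw [as_sum q]
  rw [map_sum, mapMon_eq_sum]
  exact Finset.sum_congr rfl fun d _ => dehomP_monomial d _

theorem mem_suppM_iff {f : FreeMod K n m} {p : Fin m × (Fin n →₀ ℕ)} :
    p ∈ suppM K f ↔ (f p.1).coeff p.2 ≠ 0 := by
  simp only [suppM, Finset.mem_biUnion, Finset.mem_univ, true_and, Finset.mem_image,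
    mem_support_iff]
  constructor
  · rintro ⟨j, d, hd, rfl⟩; exact hd
  · intro h; exact ⟨p.1, p.2, h, rfl⟩

theorem suppM_zero_empty : suppM K (0 : FreeMod K n m) = ∅ := by
  ext p
  simp only [mem_suppM_iff, Finset.notMem_empty, iff_false, ne_eq, not_not]
  rfl

theorem suppM_nonempty {f : FreeMod K n m} (hf : f ≠ 0) : (suppM K f).Nonempty := by
  by_contra h
  rw [Finset.not_nonempty_iff_eq_empty] at h
  apply hf
  funext j
  rw [show (0 : FreeMod K n m) j = 0 from rfl]
  apply MvPolynomial.eq_zero_iff.2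
  intro d
  by_contra hc
  have : (j, d) ∈ suppM K f := mem_suppM_iff.2 hc
  rw [h] at this
  exact absurd this (Finset.notMem_empty _)

theorem exists_isLM (mo : LinearOrder (Fin m × (Fin n →₀ ℕ))) {f : FreeMod K n m}
    (hf : f ≠ 0) : ∃ p, IsLM K mo f p := by
  letI := mo
  obtain ⟨p, hp, h⟩ := Finset.exists_max_image (suppM K f) id (suppM_nonempty hf)
  exact ⟨p, hp, fun q hq => h q hq⟩

theorem mdeg_eq (e : Fin m → ℕ) (p : Fin m × (Fin n →₀ ℕ)) :
    mdeg e p = degS p.2 + e p.1 := rfl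

end St3

end StmtHelpers
noncomputable section StmtHelpers2

open MvPolynomial

namespace St3

variable {K : Type*} [Field K] {n m : ℕ}

/-- Homogenization at level `D`. -/
def homAt (e : Fin m → ℕ) (D : ℕ) (f : FreeMod K n m) : FreeMod K (n + 1) m :=
  fun j => mapMon (genφ D (e j)) (f j)

theorem homogenize_eq (e : Fin m → ℕ) (f : FreeMod K n m) :
    homogenize K e f = homAt e (fdeg K e f) f := rfl

theorem dexp_comp_genφ (D c0 : ℕ) : Function.Injective (genφ (n := n) D c0) := by
  intro a b h
  have := congrArg dexp h
  rwa [dexp_genφ, dexp_genφ] at this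

theorem coeff_homAt_genφ (e : Fin m → ℕ) (D : ℕ) (f : FreeMod K n m) (j : Fin m)
    (d : Fin n →₀ ℕ) (hd : d ∈ (f j).support) :
    coeff (genφ D (e j) d) (homAt e D f j) = coeff d (f j) :=
  coeff_mapMon_of_injOn ((dexp_comp_genφ D (e j)).injOn) hd

theorem mem_suppM_homAt {e : Fin m → ℕ} {D : ℕ} {f : FreeMod K n m}
    {p : Fin m × (Fin (n + 1) →₀ ℕ)} (hp : p ∈ suppM K (homAt e D f)) :
    ∃ d ∈ (f p.1).support, genφ D (e p.1) d = p.2 :=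
  exists_of_coeff_mapMon_ne_zero (mem_suppM_iff.1 hp)

theorem mdeg_homAt {e : Fin m → ℕ} {D : ℕ} {f : FreeMod K n m}
    (hb : ∀ p ∈ suppM K f, mdeg e p ≤ D) :
    ∀ p ∈ suppM K (homAt e D f), mdeg e p = D := by
  intro p hp
  obtain ⟨d, hd, hφ⟩ := mem_suppM_homAt hp
  have hle : degS d + e p.1 ≤ D := by
    have := hb (p.1, d) (mem_suppM_iff.2 (mem_support_iff.1 hd))
    simpa [mdeg_eq] using this
  rw [mdeg_eq, ← hφ, degS_genφ]
  omega

theorem mapMon_mapMon {a b c : ℕ} (ψ : (Fin b →₀ ℕ) → (Fin c →₀ ℕ))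
    (χ : (Fin a →₀ ℕ) → (Fin b →₀ ℕ)) (p : MvPolynomial (Fin a) K) :
    mapMon ψ (mapMon χ p) = mapMon (ψ ∘ χ) p := by
  rw [mapMon_eq_sum χ, map_sum, mapMon_eq_sum (ψ ∘ χ)]
  exact Finset.sum_congr rfl fun d _ => mapMon_monomial ψ (χ d) _

theorem mapMon_id {a : ℕ} (p : MvPolynomial (Fin a) K) : mapMon (fun d => d) p = p := by
  rw [mapMon_eq_sum]
  exact (as_sum p).symm

theorem dehomM_homAt (e : Fin m → ℕ) (D : ℕ) (f : FreeMod K n m) :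
    dehomM K (homAt e D f) = f := by
  funext j
  show aeval (Fin.snoc X (1 : MvPolynomial (Fin n) K)) (mapMon (genφ D (e j)) (f j)) = f j
  rw [dehomP_eq, mapMon_mapMon,
    show dexp ∘ genφ D (e j) = fun d => d from funext (dexp_genφ D (e j)), mapMon_id]

theorem smul_homAt {e : Fin m → ℕ} {D : ℕ} {f : FreeMod K n m} (k : ℕ)
    (hb : ∀ p ∈ suppM K f, mdeg e p ≤ D) :
    (monomial (Finsupp.single (Fin.last n) k) (1 : K) : MvPolynomial (Fin (n + 1)) K) •
      homAt e D f = homAt e (D + k) f := by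
  funext j
  show (monomial (Finsupp.single (Fin.last n) k) (1 : K)) * (mapMon (genφ D (e j)) (f j))
    = mapMon (genφ (D + k) (e j)) (f j)
  rw [mapMon_eq_sum, mapMon_eq_sum, Finset.mul_sum]
  refine Finset.sum_congr rfl fun d hd => ?_
  rw [monomial_mul, one_mul]
  congr 1
  have hle : degS d + e j ≤ D := by
    have := hb (j, d) (mem_suppM_iff.2 (mem_support_iff.1 hd))
    simpa [mdeg_eq] using this
  rw [genφ, genφ, ← add_assoc, add_comm (Finsupp.single (Fin.last n) k), add_assoc,
    ← Finsupp.single_add]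
  rw [show k + (D - (degS d + e j)) = D + k - (degS d + e j) from by omega]

theorem homAt_add (e : Fin m → ℕ) (D : ℕ) (f g : FreeMod K n m) :
    homAt e D (f + g) = homAt e D f + homAt e D g := by
  funext j
  exact map_add (mapMon (genφ D (e j))) (f j) (g j)

theorem homAt_zero (e : Fin m → ℕ) (D : ℕ) : homAt e D (0 : FreeMod K n m) = 0 := by
  funext j
  exact map_zero (mapMon (genφ D (e j)))

/-- Homogenization of a scalar polynomial at level `D`. -/
def homPolyAt (D : ℕ) (q : MvPolynomial (Fin n) K) : MvPolynomial (Fin (n + 1)) K :=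
  mapMon (genφ D 0) q

theorem genφ_add_split {D1 D2 c0 : ℕ} {a d : Fin n →₀ ℕ} (ha : degS a ≤ D1)
    (hd : degS d + c0 ≤ D2) :
    genφ (D1 + D2) c0 (a + d) = genφ D1 0 a + genφ D2 c0 d := by
  rw [genφ, genφ, genφ, Finsupp.mapDomain_add]
  rw [show (D1 + D2) - ((degS (a + d) : ℕ) + c0) = (D1 - (degS a + 0)) + (D2 - (degS d + c0)) from
    by rw [degS_add]; omega, Finsupp.single_add]
  abel

theorem mul_eq_double_sum (q p : MvPolynomial (Fin n) K) :
    q * p = ∑ a ∈ q.support, ∑ d ∈ p.support,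
      monomial (a + d) (coeff a q * coeff d p) := by
  conv_lhs => rw [as_sum q, as_sum p]
  rw [Finset.sum_mul_sum]
  exact Finset.sum_congr rfl fun a _ => Finset.sum_congr rfl fun d _ => monomial_mul

theorem homAt_smul {e : Fin m → ℕ} {D1 D2 : ℕ} (q : MvPolynomial (Fin n) K)
    (f : FreeMod K n m) (hq : ∀ a ∈ q.support, degS a ≤ D1)
    (hf : ∀ p ∈ suppM K f, mdeg e p ≤ D2) :
    homAt e (D1 + D2) (q • f) = homPolyAt D1 q • homAt e D2 f := by
  funext j
  show mapMon (genφ (D1 + D2) (e j)) (q * f j)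
    = homPolyAt D1 q * mapMon (genφ D2 (e j)) (f j)
  rw [mul_eq_double_sum, map_sum, homPolyAt, mapMon_eq_sum, mapMon_eq_sum,
    Finset.sum_mul_sum]
  refine Finset.sum_congr rfl fun a ha => ?_
  rw [map_sum]
  refine Finset.sum_congr rfl fun d hd => ?_
  rw [mapMon_monomial, monomial_mul]
  have hd2 : degS d + e j ≤ D2 := by
    have := hf (j, d) (mem_suppM_iff.2 (mem_support_iff.1 hd))
    simpa [mdeg_eq] using this
  rw [genφ_add_split (hq a ha) hd2]

theorem dehomM_add (h1 h2 : FreeMod K (n + 1) m) :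
    dehomM K (h1 + h2) = dehomM K h1 + dehomM K h2 := by
  funext j
  exact map_add (aeval (Fin.snoc X (1 : MvPolynomial (Fin n) K))) (h1 j) (h2 j)

theorem dehomM_zero : dehomM K (0 : FreeMod K (n + 1) m) = 0 := by
  funext j
  exact map_zero (aeval (Fin.snoc X (1 : MvPolynomial (Fin n) K)))

theorem dehomM_smul (q : MvPolynomial (Fin (n + 1)) K) (h : FreeMod K (n + 1) m) :
    dehomM K (q • h) =
      (aeval (Fin.snoc X (1 : MvPolynomial (Fin n) K)) q) • dehomM K h := by
  funext j
  exact map_mul (aeval (Fin.snoc X (1 : MvPolynomial (Fin n) K))) q (h j)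

end St3

end StmtHelpers2
noncomputable section StmtHelpers3

open MvPolynomial

namespace St3

variable {K : Type*} [Field K] {n m : ℕ}

theorem coeff_mval (p : Fin m × (Fin n →₀ ℕ)) (j : Fin m) (d : Fin n →₀ ℕ) :
    (mval K p j).coeff d = if p = (j, d) then 1 else 0 := by
  classical
  rw [mval]
  rcases eq_or_ne p.1 j with h1 | h1
  · subst h1
    rw [Pi.single_eq_same, coeff_monomial]
    rcases eq_or_ne p.2 d with h2 | h2
    · rw [if_pos h2, if_pos (show p = (p.1, d) by rw [Prod.ext_iff]; exact ⟨rfl, h2⟩)]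
    · rw [if_neg h2, if_neg (fun hc => h2 (congrArg Prod.snd hc))]
  · rw [Pi.single_eq_of_ne (fun hc => h1 hc.symm), coeff_zero,
      if_neg (fun hc => h1 (congrArg Prod.fst hc))]

theorem monomial_smul_mval (γ : Fin n →₀ ℕ) (p : Fin m × (Fin n →₀ ℕ)) :
    (monomial γ (1 : K)) • mval K p = mval K (p.1, p.2 + γ) := by
  funext i
  show (monomial γ (1 : K)) * (mval K p i) = mval K (p.1, p.2 + γ) i
  by_cases h : i = p.1
  · subst h
    rw [mval, mval, Pi.single_eq_same, Pi.single_eq_same, monomial_mul, one_mul, add_comm]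
  · rw [mval, mval, Pi.single_eq_of_ne h, Pi.single_eq_of_ne h, mul_zero]

theorem exists_divides {T : Set (FreeMod K n m)} {P : (Fin m × (Fin n →₀ ℕ)) → Prop}
    (hT : ∀ v ∈ T, ∃ p, P p ∧ v = mval K p) {q : Fin m × (Fin n →₀ ℕ)}
    (hq : mval K q ∈ Submodule.span (MvPolynomial (Fin n) K) T) :
    ∃ p, P p ∧ p.1 = q.1 ∧ p.2 ≤ q.2 := by
  classical
  rw [Submodule.mem_span_set'] at hq
  obtain ⟨k, c, v, hsum⟩ := hq
  have h1 : ((mval K q q.1).coeff q.2) = 1 := by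
    simp [coeff_mval]
  rw [← hsum] at h1
  have h2 : ∑ i : Fin k, ((c i • (v i : FreeMod K n m)) q.1).coeff q.2 = 1 := by
    rw [← h1, show (∑ i : Fin k, c i • (v i : FreeMod K n m)) q.1
        = ∑ i : Fin k, (c i • (v i : FreeMod K n m)) q.1 from Finset.sum_apply _ _ _,
      coeff_sum]
  have h3 : ∃ i : Fin k, ((c i • (v i : FreeMod K n m)) q.1).coeff q.2 ≠ 0 := by
    by_contra hc
    push_neg at hc
    rw [Finset.sum_eq_zero (fun i _ => hc i)] at h2
    exact one_ne_zero h2.symm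
  obtain ⟨i, hi⟩ := h3
  obtain ⟨p, hP, hv⟩ := hT (v i) (v i).2
  rw [hv] at hi
  have hsm : (c i • mval K p) q.1 = c i * mval K p q.1 := rfl
  rw [hsm] at hi
  rcases eq_or_ne p.1 q.1 with h1' | h1'
  · rw [mval, ← h1', Pi.single_eq_same, coeff_mul_monomial'] at hi
    split_ifs at hi with hle
    · exact ⟨p, hP, h1', hle⟩
    · exact absurd rfl hi
  · rw [mval, Pi.single_eq_of_ne (fun hc => h1' hc.symm), mul_zero, coeff_zero] at hi
    exact absurd rfl hi

theorem mdeg_eq_of_mem_degComp {e : Fin m → ℕ} {z : ℕ} {f : FreeMod K n m}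
    (hf : f ∈ degComp K n m e z) : ∀ p ∈ suppM K f, mdeg e p = z := by
  classical
  let W : Submodule K (FreeMod K n m) :=
    { carrier := { g | ∀ p : Fin m × (Fin n →₀ ℕ), (g p.1).coeff p.2 ≠ 0 → mdeg e p = z }
      add_mem' := by
        intro a b ha hb p hp
        have : (a p.1).coeff p.2 ≠ 0 ∨ (b p.1).coeff p.2 ≠ 0 := by
          by_contra hc
          push_neg at hc
          apply hp
          show ((a + b) p.1).coeff p.2 = 0
          rw [Pi.add_apply, coeff_add, hc.1, hc.2, add_zero]
        rcases this with h | h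
        · exact ha p h
        · exact hb p h
      zero_mem' := by
        intro p hp
        exact absurd (coeff_zero _) hp
      smul_mem' := by
        intro c g hg p hp
        apply hg p
        intro hc
        apply hp
        show ((c • g) p.1).coeff p.2 = 0
        rw [Pi.smul_apply, coeff_smul, hc, smul_zero] }
  have hW : degComp K n m e z ≤ W := by
    rw [degComp, Submodule.span_le]
    rintro x ⟨p0, hp0, rfl⟩
    intro q hq
    rw [coeff_mval] at hq
    split_ifs at hq with hc
    · have hc' : p0 = q := hc
      rw [← hc']
      exact hp0
    · exact absurd rfl hq
  intro p hp
  exact hW hf p (mem_suppM_iff.1 hp)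

theorem isLM_dehom {e : Fin m → ℕ} (mo : LinearOrder (Fin m × (Fin n →₀ ℕ)))
    (mo' : LinearOrder (Fin m × (Fin (n + 1) →₀ ℕ)))
    (hmo' : ∀ a b : Fin m × (Fin (n + 1) →₀ ℕ), mo'.lt a b ↔
      (mdeg e a < mdeg e b ∨ (mdeg e a = mdeg e b ∧ mo.lt (dehomMon a) (dehomMon b))))
    {h : FreeMod K (n + 1) m} {z : ℕ} (hz : ∀ p ∈ suppM K h, mdeg e p = z)
    {p : Fin m × (Fin (n + 1) →₀ ℕ)} (hp : IsLM K mo' h p) :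
    IsLM K mo (dehomM K h) (dehomMon p) := by
  have hdehom : ∀ j, dehomM K h j = mapMon dexp (h j) := fun j => dehomP_eq (h j)
  have hinj : ∀ j : Fin m, Set.InjOn dexp ((h j).support : Set (Fin (n + 1) →₀ ℕ)) := by
    intro j d1 hd1 d2 hd2 hdd
    have h1 : degS d1 + e j = z :=
      hz (j, d1) (mem_suppM_iff.2 (mem_support_iff.1 (Finset.mem_coe.1 hd1)))
    have h2 : degS d2 + e j = z :=
      hz (j, d2) (mem_suppM_iff.2 (mem_support_iff.1 (Finset.mem_coe.1 hd2)))
    exact dexp_injOn (by omega) hdd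
  constructor
  · rw [mem_suppM_iff, dehomMon_def]
    show (dehomM K h p.1).coeff (dexp p.2) ≠ 0
    rw [hdehom, coeff_mapMon_of_injOn (hinj p.1) (mem_support_iff.2 (mem_suppM_iff.1 hp.1))]
    exact mem_suppM_iff.1 hp.1
  · intro q hq
    rw [mem_suppM_iff, hdehom] at hq
    obtain ⟨d, hd, hdq⟩ := exists_of_coeff_mapMon_ne_zero hq
    have hp' : (q.1, d) ∈ suppM K h := mem_suppM_iff.2 (mem_support_iff.1 hd)
    have hqeq : q = dehomMon (q.1, d) := by
      rw [dehomMon_def]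
      exact Prod.ext rfl hdq.symm
    have hle : mo'.le (q.1, d) p := hp.2 _ hp'
    rcases eq_or_ne (q.1, d) p with heq | hne
    · rw [hqeq, heq]
      exact mo.le_refl (dehomMon p)
    · have hnle : ¬ mo'.le p (q.1, d) := fun hba => hne (mo'.le_antisymm _ _ hle hba)
      have hlt : mo'.lt (q.1, d) p := (mo'.lt_iff_le_not_ge _ _).2 ⟨hle, hnle⟩
      rcases (hmo' _ _).1 hlt with hdeg | ⟨_, hlt2⟩
      · rw [hz _ hp', hz _ hp.1] at hdeg
        exact absurd hdeg (lt_irrefl z)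
      · rw [hqeq]
        exact ((mo.lt_iff_le_not_ge _ _).1 hlt2).1

end St3

end StmtHelpers3
noncomputable section StmtHelpers4

open MvPolynomial

namespace St3

variable {K : Type*} [Field K] {n m : ℕ}

theorem suppM_add_subset (f g : FreeMod K n m) :
    suppM K (f + g) ⊆ suppM K f ∪ suppM K g := by
  intro p hp
  rw [mem_suppM_iff] at hp
  rw [Finset.mem_union, mem_suppM_iff, mem_suppM_iff]
  by_contra hc
  push_neg at hc
  apply hp
  show ((f + g) p.1).coeff p.2 = 0
  rw [Pi.add_apply, coeff_add, hc.1, hc.2, add_zero]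

theorem mdeg_smul_le {e : Fin m → ℕ} {D : ℕ} {g : FreeMod K n m}
    (hg : ∀ p ∈ suppM K g, mdeg e p ≤ D) (q : MvPolynomial (Fin n) K) :
    ∀ p ∈ suppM K (q • g), mdeg e p ≤ q.totalDegree + D := by
  classical
  intro p hp
  rw [mem_suppM_iff] at hp
  have hsupp : p.2 ∈ (q * g p.1).support := mem_support_iff.2 hp
  have hsub := support_mul q (g p.1) hsupp
  rw [Finset.mem_add] at hsub
  obtain ⟨a, ha, d, hd, had⟩ := hsub
  have h1 : degS a ≤ q.totalDegree := le_totalDegree ha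
  have h2 : degS d + e p.1 ≤ D := hg (p.1, d) (mem_suppM_iff.2 (mem_support_iff.1 hd))
  rw [mdeg_eq, ← had, degS_add]
  omega

theorem exists_homAt_mem {e : Fin m → ℕ} {s : ℕ} (f : Fin s → FreeMod K n m)
    {g : FreeMod K n m}
    (hg : g ∈ Submodule.span (MvPolynomial (Fin n) K) (Set.range f)) :
    ∃ D, (∀ p ∈ suppM K g, mdeg e p ≤ D) ∧
      homAt e D g ∈ Submodule.span (MvPolynomial (Fin (n + 1)) K)
        (Set.range fun i => homogenize K e (f i)) := by
  induction hg using Submodule.span_induction with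
  | mem x hx =>
      obtain ⟨i, rfl⟩ := hx
      exact ⟨fdeg K e (f i), fun p hp => Finset.le_sup hp,
        Submodule.subset_span ⟨i, (homogenize_eq e (f i)).symm⟩⟩
  | zero =>
      refine ⟨0, ?_, ?_⟩
      · intro p hp
        rw [suppM_zero_empty] at hp
        exact absurd hp (Finset.notMem_empty p)
      · rw [homAt_zero]
        exact Submodule.zero_mem _
  | add x y hx hy ihx ihy =>
      obtain ⟨D1, hb1, hm1⟩ := ihx
      obtain ⟨D2, hb2, hm2⟩ := ihy
      refine ⟨max D1 D2, ?_, ?_⟩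
      · intro p hp
        rcases Finset.mem_union.1 (suppM_add_subset x y hp) with h | h
        · exact le_trans (hb1 p h) (le_max_left _ _)
        · exact le_trans (hb2 p h) (le_max_right _ _)
      · rw [homAt_add]
        apply Submodule.add_mem
        · rw [show max D1 D2 = D1 + (max D1 D2 - D1) from by omega, ← smul_homAt _ hb1]
          exact Submodule.smul_mem _ _ hm1
        · rw [show max D1 D2 = D2 + (max D1 D2 - D2) from by omega, ← smul_homAt _ hb2]
          exact Submodule.smul_mem _ _ hm2
  | smul a x hx ihx =>
      obtain ⟨D, hb, hm⟩ := ihx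
      refine ⟨a.totalDegree + D, mdeg_smul_le hb a, ?_⟩
      rw [homAt_smul a x (fun a' ha' => le_totalDegree ha') hb]
      exact Submodule.smul_mem _ _ hm

theorem dehomM_mem {M : Submodule (MvPolynomial (Fin n) K) (FreeMod K n m)}
    {e : Fin m → ℕ} {h : FreeMod K (n + 1) m}
    (hh : h ∈ Submodule.span (MvPolynomial (Fin (n + 1)) K)
      { h | ∃ g ∈ M, h = homogenize K e g }) :
    dehomM K h ∈ M := by
  let W : Submodule (MvPolynomial (Fin (n + 1)) K) (FreeMod K (n + 1) m) :=
    { carrier := { v | dehomM K v ∈ M }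
      add_mem' := by
        intro a b ha hb
        show dehomM K (a + b) ∈ M
        rw [dehomM_add]
        exact Submodule.add_mem M ha hb
      zero_mem' := by
        show dehomM K 0 ∈ M
        rw [dehomM_zero]
        exact Submodule.zero_mem M
      smul_mem' := by
        intro c v hv
        show dehomM K (c • v) ∈ M
        rw [dehomM_smul]
        exact Submodule.smul_mem M _ hv }
  have hW : Submodule.span (MvPolynomial (Fin (n + 1)) K)
      { h | ∃ g ∈ M, h = homogenize K e g } ≤ W := by
    rw [Submodule.span_le]
    rintro x ⟨g, hg, rfl⟩
    show dehomM K (homogenize K e g) ∈ M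
    rw [homogenize_eq, dehomM_homAt]
    exact hg
  exact hW hh

end St3

end StmtHelpers4
/-- If `S[t]f₁^h + ⋯ + S[t]f_s^h ⊆ N ⊆ M^h` with `N` graded and `G` is a
homogeneous Gröbner basis of `N` w.r.t. the extension `≺'` of `≺`, then `G^{deh}` is a
Gröbner basis of `M = Sf₁ + ⋯ + Sf_s` w.r.t. `≺`. -/
theorem stmt_3 (K : Type*) [Field K] (n m s : ℕ) (e : Fin m → ℕ)
    (mo : LinearOrder (Fin m × (Fin n →₀ ℕ))) (hmo : IsMonomialOrder mo)
    (mo' : LinearOrder (Fin m × (Fin (n + 1) →₀ ℕ)))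
    (hmo' : ∀ a b : Fin m × (Fin (n + 1) →₀ ℕ), mo'.lt a b ↔
      (mdeg e a < mdeg e b ∨
        (mdeg e a = mdeg e b ∧ mo.lt (dehomMon a) (dehomMon b))))
    (f : Fin s → FreeMod K n m)
    (M : Submodule (MvPolynomial (Fin n) K) (FreeMod K n m))
    (hM : M = Submodule.span (MvPolynomial (Fin n) K) (Set.range f))
    (N : Submodule (MvPolynomial (Fin (n + 1)) K) (FreeMod K (n + 1) m))
    (hN1 : Submodule.span (MvPolynomial (Fin (n + 1)) K)
      (Set.range fun i => homogenize K e (f i)) ≤ N)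
    (hN2 : N ≤ Submodule.span (MvPolynomial (Fin (n + 1)) K)
      { h | ∃ g ∈ M, h = homogenize K e g })
    (hNgraded : N = Submodule.span (MvPolynomial (Fin (n + 1)) K)
      { h : FreeMod K (n + 1) m | h ∈ N ∧ ∃ z, h ∈ degComp K (n + 1) m e z })
    (G : Set (FreeMod K (n + 1) m))
    (hGhom : ∀ g ∈ G, ∃ z, g ∈ degComp K (n + 1) m e z)
    (hGB : IsGB K mo' G N) :
    IsGB K mo (dehomM K '' G) M := by
  obtain ⟨hG_sub, hG_span⟩ := hGB
  constructor
  · rintro x ⟨g'', hg'', rfl⟩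
    exact St3.dehomM_mem (hN2 (hG_sub hg''))
  · apply le_antisymm
    · apply Submodule.span_le.2
      rintro x ⟨gd, ⟨g'', hg''G, rfl⟩, p, hlm, rfl⟩
      exact Submodule.subset_span
        ⟨dehomM K g'', St3.dehomM_mem (hN2 (hG_sub hg''G)), p, hlm, rfl⟩
    · apply Submodule.span_le.2
      rintro x ⟨g, hgM, p, hlm, rfl⟩
      have hg0 : g ≠ 0 := by
        intro hc
        have hmem := hlm.1
        rw [hc, St3.suppM_zero_empty] at hmem
        exact Finset.notMem_empty p hmem
      obtain ⟨D, hD, hmem⟩ := St3.exists_homAt_mem (e := e) f (hM ▸ hgM)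
      have hHN : St3.homAt e D g ∈ N := hN1 hmem
      have hdh : dehomM K (St3.homAt e D g) = g := St3.dehomM_homAt e D g
      have hH0 : St3.homAt e D g ≠ 0 := by
        intro hc
        apply hg0
        rw [← hdh, hc, St3.dehomM_zero]
      have hHhom : ∀ q ∈ suppM K (St3.homAt e D g), mdeg e q = D := St3.mdeg_homAt hD
      obtain ⟨p', hp'⟩ := St3.exists_isLM mo' hH0
      have hLMg : IsLM K mo g (dehomMon p') := by
        rw [← hdh]
        exact St3.isLM_dehom mo mo' hmo' hHhom hp'
      have hpp : p = dehomMon p' :=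
        mo.le_antisymm p (dehomMon p') (hLMg.2 p hlm.1) (hlm.2 _ hLMg.1)
      have h1 : mval K p' ∈ Submodule.span (MvPolynomial (Fin (n + 1)) K)
          { v | ∃ g'' ∈ G, ∃ pp, IsLM K mo' g'' pp ∧ v = mval K pp } := by
        rw [hG_span]
        exact Submodule.subset_span ⟨St3.homAt e D g, hHN, p', hp', rfl⟩
      have hT : ∀ v ∈ { v | ∃ g'' ∈ G, ∃ pp, IsLM K mo' g'' pp ∧ v = mval K pp },
          ∃ pp, (∃ g'' ∈ G, IsLM K mo' g'' pp) ∧ v = mval K pp := by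
        rintro v ⟨g'', hg'', pp, hlm'', rfl⟩
        exact ⟨pp, ⟨g'', hg'', hlm''⟩, rfl⟩
      obtain ⟨p'', ⟨g'', hg''G, hlm''⟩, hfst, hsnd⟩ := St3.exists_divides hT h1
      obtain ⟨γ, hγ⟩ := le_iff_exists_add.1 hsnd
      obtain ⟨z'', hz''⟩ := hGhom g'' hg''G
      have hLM'' : IsLM K mo (dehomM K g'') (dehomMon p'') :=
        St3.isLM_dehom mo mo' hmo' (St3.mdeg_eq_of_mem_degComp hz'') hlm''
      have heq : mval K p = (monomial (St3.dexp γ) (1 : K)) • mval K (dehomMon p'') := by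
        rw [St3.monomial_smul_mval, hpp, St3.dehomMon_def, St3.dehomMon_def]
        refine congrArg (mval K) (Prod.ext_iff.2 ⟨hfst.symm, ?_⟩)
        show St3.dexp p'.2 = St3.dexp p''.2 + St3.dexp γ
        rw [hγ, St3.dexp_add]
      rw [heq]
      exact Submodule.smul_mem _ _ (Submodule.subset_span
        ⟨dehomM K g'', ⟨g'', hg''G, rfl⟩, dehomMon p'', hLM'', rfl⟩)
end

section
/- Let P be a q-exact cone decomposition of a K-subspace T ⊆ F with Macaulay constants b_0 ≥ b_1 ≥ ... ≥ b_{n+1} = q. Then for each i = 1,...,n and each degree d with b_{i+1} ≤ d < b_i, there is exactly one cone C ∈ P of positive dimension with deg(C) = d, and that cone has dim(C) = i. In particular b_i = b_{i+1} + |{C ∈ P⁺ : dim(C) = i}| for i = 1,...,n. -/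
open MvPolynomial

private lemma deg_lt_macaulay {K : Type*} [Field K] {n m : ℕ} (q : ℕ)
    {P : Finset (ConeData K n m)} {c : ConeData K n m} (hc : c ∈ P) {k : ℕ}
    (hk : k ≤ c.2.1.card) : c.2.2 < macaulay K q P k := by
  have h := Finset.le_sup (s := P.filter fun c => k ≤ c.2.1.card)
    (f := fun c : ConeData K n m => c.2.2 + 1) (Finset.mem_filter.2 ⟨hc, hk⟩)
  beta_reduce at h
  have h2 := le_max_right q ((P.filter fun c => k ≤ c.2.1.card).sup fun c => c.2.2 + 1)
  unfold macaulay
  omega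

private lemma exists_of_lt_macaulay {K : Type*} [Field K] {n m : ℕ} {q : ℕ}
    {P : Finset (ConeData K n m)} (hst : IsStandard K q P) {k d : ℕ} (hk : 1 ≤ k)
    (hq : q ≤ d) (hd : d < macaulay K q P k) :
    ∃ c' ∈ P, c'.2.2 = d ∧ k ≤ c'.2.1.card := by
  have hsup : d < (P.filter fun c => k ≤ c.2.1.card).sup fun c => c.2.2 + 1 := by
    unfold macaulay at hd; omega
  obtain ⟨c0, hc0, hlt⟩ := Finset.lt_sup_iff.1 hsup
  obtain ⟨hc0P, hc0k⟩ := Finset.mem_filter.1 hc0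
  obtain ⟨c', hc'P, hdeg, hcard⟩ :=
    hst.2 c0 hc0P (lt_of_lt_of_le hk hc0k) d hq (by omega)
  exact ⟨c', hc'P, hdeg, le_trans hc0k hcard⟩

private lemma le_card_of_lt_macaulay {K : Type*} [Field K] {n m : ℕ} {q : ℕ}
    {P : Finset (ConeData K n m)} (hex : IsExact K q P) {c : ConeData K n m}
    (hc : c ∈ P) (hpos : 0 < c.2.1.card) {k : ℕ} (hk : 1 ≤ k)
    (hd : c.2.2 < macaulay K q P k) : k ≤ c.2.1.card := by
  have hq : q ≤ c.2.2 := hex.1.1 c hc hpos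
  obtain ⟨c', hc'P, hdeg, hcard⟩ := exists_of_lt_macaulay hex.1 hk hq hd
  by_cases h : c' = c
  · subst h; exact hcard
  · exact absurd hdeg.symm (hex.2 c hc c' hc'P hpos (lt_of_lt_of_le hk hcard) (Ne.symm h))

private lemma macaulay_mono {K : Type*} [Field K] {n m : ℕ} (q : ℕ)
    (P : Finset (ConeData K n m)) (i : ℕ) :
    macaulay K q P (i + 1) ≤ macaulay K q P i := by
  apply max_le (le_max_left _ _)
  refine le_trans (Finset.sup_mono ?_) (le_max_right _ _)
  intro c hc
  simp only [Finset.mem_filter] at hc ⊢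
  exact ⟨hc.1, by omega⟩

/-- For a `q`-exact cone decomposition `P` of `T` with Macaulay constants
`b`, for each `i = 1,…,n` and each `d` with `b_{i+1} ≤ d < b_i` there is exactly one
positive-dimensional cone of `P` of degree `d`, which has dimension `i`; consequently
`b_i = b_{i+1} + #{C ∈ P⁺ : dim C = i}`. -/
theorem stmt_6 (K : Type*) [Field K] (n m q : ℕ) (e : Fin m → ℕ)
    (T : Submodule K (FreeMod K n m)) (P : Finset (ConeData K n m))
    (hdec : IsConeDecomp K e P T) (hex : IsExact K q P) :
    (∀ i : ℕ, 1 ≤ i → i ≤ n → ∀ d : ℕ,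
      macaulay K q P (i + 1) ≤ d → d < macaulay K q P i →
      (∃! c : ConeData K n m, c ∈ P ∧ 0 < c.2.1.card ∧ c.2.2 = d) ∧
      (∀ c ∈ P, 0 < c.2.1.card → c.2.2 = d → c.2.1.card = i)) ∧
    (∀ i : ℕ, 1 ≤ i → i ≤ n →
      macaulay K q P i =
        macaulay K q P (i + 1) + (P.filter fun c => c.2.1.card = i).card) := by
  have hdimeq : ∀ i : ℕ, 1 ≤ i → ∀ d : ℕ,
      macaulay K q P (i + 1) ≤ d → d < macaulay K q P i →
      ∀ c ∈ P, 0 < c.2.1.card → c.2.2 = d → c.2.1.card = i := by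
    intro i hi d h1 h2 c hc hpos hdeg
    have hge : i ≤ c.2.1.card := le_card_of_lt_macaulay hex hc hpos hi (hdeg ▸ h2)
    have hlt : ¬ (i + 1 ≤ c.2.1.card) := by
      intro hle
      have := deg_lt_macaulay q hc hle
      omega
    omega
  have hexu : ∀ i : ℕ, 1 ≤ i → ∀ d : ℕ,
      macaulay K q P (i + 1) ≤ d → d < macaulay K q P i →
      ∃! c : ConeData K n m, c ∈ P ∧ 0 < c.2.1.card ∧ c.2.2 = d := by
    intro i hi d h1 h2
    have hq : q ≤ d := le_trans (le_max_left _ _) h1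
    obtain ⟨c', hc'P, hdeg, hcard⟩ := exists_of_lt_macaulay hex.1 hi hq h2
    refine ⟨c', ⟨hc'P, lt_of_lt_of_le hi hcard, hdeg⟩, ?_⟩
    rintro y ⟨hyP, hypos, hydeg⟩
    by_contra hne
    exact hex.2 y hyP c' hc'P hypos (lt_of_lt_of_le hi hcard) hne (by omega)
  refine ⟨fun i hi _ d h1 h2 => ⟨hexu i hi d h1 h2, hdimeq i hi d h1 h2⟩, ?_⟩
  intro i hi _
  have hmono := macaulay_mono (K := K) q P i
  have hcard : (P.filter fun c => c.2.1.card = i).card =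
      (Finset.Ico (macaulay K q P (i + 1)) (macaulay K q P i)).card := by
    apply Finset.card_bij (fun c _ => c.2.2)
    · intro c hc
      obtain ⟨hcP, hci⟩ := Finset.mem_filter.1 hc
      have hpos : 0 < c.2.1.card := by omega
      refine Finset.mem_Ico.2 ⟨?_, ?_⟩
      · by_contra h
        have := le_card_of_lt_macaulay (k := i + 1) hex hcP hpos (by omega) (by omega)
        omega
      · exact deg_lt_macaulay q hcP (le_of_eq hci.symm)
    · intro a ha b hb hab
      obtain ⟨haP, hai⟩ := Finset.mem_filter.1 ha
      obtain ⟨hbP, hbi⟩ := Finset.mem_filter.1 hb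
      by_contra hne
      exact hex.2 a haP b hbP (by omega) (by omega) hne hab
    · intro d hd
      obtain ⟨h1, h2⟩ := Finset.mem_Ico.1 hd
      have hq : q ≤ d := le_trans (le_max_left _ _) h1
      obtain ⟨c', hc'P, hdeg, hcard⟩ := exists_of_lt_macaulay hex.1 hi hq h2
      have := hdimeq i hi d h1 h2 c' hc'P (lt_of_lt_of_le hi hcard) hdeg
      exact ⟨c', Finset.mem_filter.2 ⟨hc'P, this⟩, hdeg⟩
  rw [hcard, Nat.card_Ico]
  omega
end

section
/- Let P be a q-exact cone decomposition of a graded K-subspace T ⊆ F with Macaulay constants b_0,...,b_{n+1}. Then for all z ≥ b_0, the Hilbert function of T equals HF_T(z) = binomial(z − b_{n+1} + n, n) − 1 − Σ_{i=1}^n binomial(z − b_i + i − 1, i). -/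
open MvPolynomial

noncomputable section CombPart

variable {n m : ℕ} {K : Type*} [Field K]

lemma hockey (z k : ℕ) (hk : 1 ≤ k) :
    ∀ b : ℕ, b ≤ z → ∀ a : ℕ, a ≤ b →
      (∑ d ∈ Finset.Ico a b, (((z - d) + k - 1).choose (k - 1) : ℤ)) =
        ((z - a + k).choose k : ℤ) - ((z - b + k).choose k : ℤ) := by
  intro b
  induction b with
  | zero => intro _ a ha; interval_cases a; simp
  | succ b ih =>
    intro hbz a ha
    rcases Nat.eq_or_lt_of_le ha with rfl | hab
    · simp
    have ha' : a ≤ b := Nat.lt_succ_iff.mp hab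
    rw [Finset.sum_Ico_succ_top ha',
      ih (le_of_lt (Nat.lt_of_lt_of_le (Nat.lt_succ_self b) hbz)) a ha']
    have h1 : z - b + k = z - b + k - 1 + 1 := by omega
    have h2 : z - (b+1) + k = z - b + k - 1 := by omega
    have hp : (z - b + k).choose k = (z - b + k - 1).choose (k-1) + (z - b + k - 1).choose k := by
      have hk' : k - 1 + 1 = k := by omega
      rw [h1, ← hk', Nat.choose_succ_succ, hk']
      simp [Nat.succ_eq_add_one, hk']
    rw [h2, hp]
    push_cast
    ring

lemma telescope (u : ℕ → ℤ) (n : ℕ) :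
    (∑ k ∈ Finset.Icc 1 n, (u k - u (k-1))) = u n - u 0 := by
  induction n with
  | zero => simp
  | succ n ih =>
    rw [Finset.sum_Icc_succ_top (by omega), ih]
    simp only [Nat.add_sub_cancel]
    ring

lemma macaulay_antitone (q : ℕ) (P : Finset (ConeData K n m)) :
    Antitone (macaulay K q P) := by
  intro k l hkl
  exact max_le_max le_rfl (Finset.sup_mono
    (Finset.monotone_filter_right P (fun c _ hc => le_trans hkl hc)))

lemma le_macaulay (q : ℕ) (P : Finset (ConeData K n m)) (k : ℕ) {c : ConeData K n m}
    (hc : c ∈ P) (hck : k ≤ c.2.1.card) : c.2.2 + 1 ≤ macaulay K q P k := by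
  have h1 : c ∈ P.filter (fun c => k ≤ c.2.1.card) := by
    simp [Finset.mem_filter, hc, hck]
  exact le_trans (Finset.le_sup (f := fun c : ConeData K n m => c.2.2 + 1) h1)
    (le_max_right _ _)

lemma macaulay_reached (q : ℕ) (P : Finset (ConeData K n m)) (k : ℕ) {d : ℕ}
    (hd : d < macaulay K q P k) (hqd : q ≤ d) :
    ∃ c ∈ P, k ≤ c.2.1.card ∧ d ≤ c.2.2 := by
  rcases Finset.eq_empty_or_nonempty (P.filter fun c => k ≤ c.2.1.card) with he | hne
  · exfalso
    have : macaulay K q P k = q := by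
      unfold macaulay
      rw [he]
      simp
    omega
  · obtain ⟨c₀, hc₀, hsup⟩ := Finset.exists_mem_eq_sup _ hne
      (fun c : ConeData K n m => c.2.2 + 1)
    simp only [Finset.mem_filter] at hc₀
    have hd' : d < max q ((P.filter fun c => k ≤ c.2.1.card).sup
      fun c => c.2.2 + 1) := hd
    rcases lt_max_iff.mp hd' with h | h
    · omega
    · rw [hsup] at h
      exact ⟨c₀, hc₀.1, hc₀.2, by omega⟩

lemma image_deg_ge (q : ℕ) (P : Finset (ConeData K n m)) (hex : IsExact K q P)
    {k : ℕ} (hk : 1 ≤ k) :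
    (P.filter fun c => k ≤ c.2.1.card).image (fun c => c.2.2) =
      Finset.Ico q (macaulay K q P k) := by
  ext d
  simp only [Finset.mem_image, Finset.mem_filter, Finset.mem_Ico]
  constructor
  · rintro ⟨c, ⟨hcP, hck⟩, rfl⟩
    exact ⟨hex.1.1 c hcP (by omega), by have := le_macaulay q P k hcP hck; omega⟩
  · rintro ⟨hqd, hd⟩
    obtain ⟨c₀, hc₀P, hc₀k, hdc₀⟩ := macaulay_reached q P k hd hqd
    obtain ⟨c', hc'P, hc'd, hc'card⟩ := hex.1.2 c₀ hc₀P (by omega) d hqd hdc₀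
    exact ⟨c', ⟨hc'P, by omega⟩, hc'd⟩

lemma image_deg_eq (q : ℕ) (P : Finset (ConeData K n m)) (hex : IsExact K q P)
    {k : ℕ} (hk : 1 ≤ k) :
    (P.filter fun c => c.2.1.card = k).image (fun c => c.2.2) =
      Finset.Ico (macaulay K q P (k+1)) (macaulay K q P k) := by
  have key : (P.filter fun c => c.2.1.card = k).image (fun c => c.2.2) =
      ((P.filter fun c => k ≤ c.2.1.card).image (fun c => c.2.2)) \
        ((P.filter fun c => k + 1 ≤ c.2.1.card).image (fun c => c.2.2)) := by
    ext d
    simp only [Finset.mem_image, Finset.mem_filter, Finset.mem_sdiff, not_exists]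
    constructor
    · rintro ⟨c, ⟨hcP, hck⟩, rfl⟩
      refine ⟨⟨c, ⟨hcP, by omega⟩, rfl⟩, ?_⟩
      rintro c' ⟨⟨hc'P, hc'k⟩, hc'd⟩
      have hne : c ≠ c' := by intro h; rw [h] at hck; omega
      exact hex.2 c hcP c' hc'P (by omega) (by omega) hne hc'd.symm
    · rintro ⟨⟨c, ⟨hcP, hck⟩, rfl⟩, hnot⟩
      refine ⟨c, ⟨hcP, ?_⟩, rfl⟩
      by_contra h
      exact hnot c ⟨⟨hcP, by omega⟩, rfl⟩
  rw [key, image_deg_ge q P hex hk, image_deg_ge q P hex (by omega),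
    Finset.Ico_diff_Ico_left]
  congr 1
  exact max_eq_right (le_max_left _ _)

lemma comb_main (q : ℕ) (P : Finset (ConeData K n m)) (hex : IsExact K q P)
    (z : ℕ) (hz : macaulay K q P 0 ≤ z) :
    ((∑ c ∈ P, (c.2.1.card + (z - c.2.2) - 1).choose (z - c.2.2) : ℕ) : ℤ) =
      ((z - macaulay K q P (n + 1) + n).choose n : ℤ) - 1 -
        ∑ i ∈ Finset.Icc 1 n, ((z - macaulay K q P i + i - 1).choose i : ℤ) := by
  classical
  set b := macaulay K q P with hb
  have hanti : Antitone b := macaulay_antitone q P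
  have hbz : ∀ k, b k ≤ z := fun k => le_trans (hanti (Nat.zero_le k)) hz
  have hdeg : ∀ c ∈ P, c.2.2 < z := fun c hc => by
    have h := le_macaulay (K := K) q P 0 hc (Nat.zero_le _)
    rw [← hb] at h
    omega
  have h0 : ∀ c ∈ P, (c.2.1.card + (z - c.2.2) - 1).choose (z - c.2.2) ≠ 0 →
      0 < c.2.1.card := by
    intro c hc hne
    by_contra h
    have hcard : c.2.1.card = 0 := by omega
    have hw : 1 ≤ z - c.2.2 := by have := hdeg c hc; omega
    apply hne
    rw [hcard]
    exact Nat.choose_eq_zero_of_lt (by omega)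
  rw [← Finset.sum_filter_of_ne h0]
  have hmaps : ∀ c ∈ P.filter (fun c => 0 < c.2.1.card),
      c.2.1.card ∈ Finset.Icc 1 n := by
    intro c hc
    simp only [Finset.mem_filter] at hc
    have : c.2.1.card ≤ n := by
      have := Finset.card_le_univ c.2.1
      simpa using this
    simp only [Finset.mem_Icc]
    omega
  rw [← Finset.sum_fiberwise_of_maps_to hmaps]
  push_cast
  have hperk : ∀ k ∈ Finset.Icc 1 n,
      ((∑ c ∈ (P.filter fun c => 0 < c.2.1.card).filter (fun c => c.2.1.card = k),
        ((c.2.1.card + (z - c.2.2) - 1).choose (z - c.2.2) : ℤ))) =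
      ((z - b (k+1) + k).choose k : ℤ) - ((z - b k + k).choose k : ℤ) := by
    intro k hk
    simp only [Finset.mem_Icc] at hk
    have hfil : (P.filter fun c => 0 < c.2.1.card).filter (fun c => c.2.1.card = k) =
        P.filter (fun c => c.2.1.card = k) := by
      rw [Finset.filter_filter]
      apply Finset.filter_congr
      intro c _
      constructor
      · rintro ⟨_, h⟩; exact h
      · intro h; exact ⟨by omega, h⟩
    rw [hfil]
    have hinj : ∀ x ∈ P.filter (fun c => c.2.1.card = k),
        ∀ y ∈ P.filter (fun c => c.2.1.card = k),
        x.2.2 = y.2.2 → x = y := by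
      intro x hx y hy hxy
      simp only [Finset.mem_filter] at hx hy
      by_contra hne
      exact hex.2 x hx.1 y hy.1 (by omega) (by omega) hne hxy
    have himg := Finset.sum_image (f := fun d => (((z - d) + k - 1).choose (k - 1) : ℤ)) hinj
    have hcongr : ∀ c ∈ P.filter (fun c => c.2.1.card = k),
        ((c.2.1.card + (z - c.2.2) - 1).choose (z - c.2.2) : ℤ) =
        (((z - c.2.2) + k - 1).choose (k - 1) : ℤ) := by
      intro c hc
      simp only [Finset.mem_filter] at hc
      rw [hc.2]
      have hw : 1 ≤ z - c.2.2 := by have := hdeg c hc.1; omega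
      norm_cast
      have h1 : k + (z - c.2.2) - 1 = (z - c.2.2) + k - 1 := by omega
      have h2 : (z - c.2.2) + k - 1 - (z - c.2.2) = k - 1 := by omega
      rw [h1, ← h2]
      exact (Nat.choose_symm (by omega)).symm
    rw [Finset.sum_congr rfl hcongr, ← himg, image_deg_eq q P hex (by omega)]
    exact hockey z k (by omega) (b k) (hbz k) (b (k+1)) (hanti (by omega))
  rw [Finset.sum_congr rfl hperk]
  have hPas : ∀ k ∈ Finset.Icc 1 n,
      ((z - b (k+1) + k).choose k : ℤ) - ((z - b k + k).choose k : ℤ) =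
      (((z - b (k+1) + k).choose k : ℤ) - ((z - b ((k-1)+1) + (k-1)).choose (k-1) : ℤ)) -
        ((z - b k + k - 1).choose k : ℤ) := by
    intro k hk
    simp only [Finset.mem_Icc] at hk
    have hzk : b k ≤ z := hbz k
    have hk' : k - 1 + 1 = k := by omega
    have h1 : z - b k + k = (z - b k + k - 1) + 1 := by omega
    have hp : (z - b k + k).choose k =
        (z - b k + k - 1).choose (k-1) + (z - b k + k - 1).choose k := by
      rw [h1, ← hk', Nat.choose_succ_succ, hk']
      simp [Nat.succ_eq_add_one, hk']
    have hU1 : (z - b ((k-1)+1) + (k-1)).choose (k-1) =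
        (z - b k + k - 1).choose (k-1) := by
      rw [hk']
      congr 1
      omega
    rw [hp, hU1]
    push_cast
    ring
  rw [Finset.sum_congr rfl hPas, Finset.sum_sub_distrib,
    telescope (fun k => ((z - b (k+1) + k).choose k : ℤ)) n]
  simp only [Nat.zero_add, Nat.choose_zero_right, Nat.cast_one]

end CombPart
noncomputable section AlgPart

open MvPolynomial

variable {K : Type*} [Field K] {n m : ℕ}

/-- The monomial basis of the free module. -/
def myBasis (K : Type*) [Field K] (n m : ℕ) :
    Module.Basis (Fin m × (Fin n →₀ ℕ)) K (FreeMod K n m) :=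
  (Pi.basis fun _ : Fin m => MvPolynomial.basisMonomials (Fin n) K).reindex
    (Equiv.sigmaEquivProd (Fin m) (Fin n →₀ ℕ))

lemma myBasis_apply (p : Fin m × (Fin n →₀ ℕ)) : myBasis K n m p = mval K p := by
  rw [myBasis, Module.Basis.reindex_apply]
  rw [show (Equiv.sigmaEquivProd (Fin m) (Fin n →₀ ℕ)).symm p = ⟨p.1, p.2⟩ from rfl]
  rw [Pi.basis_apply]
  rfl

lemma degComp_eq_span (e : Fin m → ℕ) (z : ℕ) :
    degComp K n m e z = Submodule.span K (myBasis K n m '' {p | mdeg e p = z}) := by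
  unfold degComp
  congr 1
  ext f
  constructor
  · rintro ⟨p, hp, rfl⟩
    exact ⟨p, hp, myBasis_apply p⟩
  · rintro ⟨p, hp, rfl⟩
    exact ⟨p, hp, myBasis_apply p⟩

/-- Projection onto the degree-`z` component. -/
def projZ (e : Fin m → ℕ) (z : ℕ) : FreeMod K n m →ₗ[K] FreeMod K n m :=
  (myBasis K n m).constr ℕ fun p => if mdeg e p = z then mval K p else 0

lemma projZ_basis (e : Fin m → ℕ) (z : ℕ) (p : Fin m × (Fin n →₀ ℕ)) :
    projZ e z (myBasis K n m p) = if mdeg e p = z then mval K p else 0 :=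
  Module.Basis.constr_basis _ _ _ _

lemma projZ_of_mem {e : Fin m → ℕ} {z : ℕ} {f : FreeMod K n m}
    (hf : f ∈ degComp K n m e z) : projZ e z f = f := by
  rw [degComp_eq_span] at hf
  induction hf using Submodule.span_induction with
  | mem x hx =>
    obtain ⟨p, hp, rfl⟩ := hx
    have hp' : mdeg e p = z := hp
    rw [projZ_basis, myBasis_apply, if_pos hp']
  | zero => simp
  | add x y _ _ hx hy => rw [map_add, hx, hy]
  | smul a x _ hx => rw [map_smul, hx]

lemma projZ_of_mem_ne {e : Fin m → ℕ} {z z' : ℕ} (hzz : z' ≠ z) {f : FreeMod K n m}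
    (hf : f ∈ degComp K n m e z') : projZ e z f = 0 := by
  rw [degComp_eq_span] at hf
  induction hf using Submodule.span_induction with
  | mem x hx =>
    obtain ⟨p, hp, rfl⟩ := hx
    have hp' : mdeg e p = z' := hp
    rw [projZ_basis, if_neg (by rw [hp']; exact hzz)]
  | zero => simp
  | add x y _ _ hx hy => rw [map_add, hx, hy, add_zero]
  | smul a x _ hx => rw [map_smul, hx, smul_zero]

lemma projZ_mem (e : Fin m → ℕ) (z : ℕ) (f : FreeMod K n m) :
    projZ e z f ∈ degComp K n m e z := by
  have hf : f ∈ Submodule.span K (Set.range (myBasis K n m)) := by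
    rw [Module.Basis.span_eq]; trivial
  induction hf using Submodule.span_induction with
  | mem x hx =>
    obtain ⟨p, rfl⟩ := hx
    rw [projZ_basis]
    split_ifs with h
    · exact Submodule.subset_span ⟨p, h, rfl⟩
    · exact Submodule.zero_mem _
  | zero => simp
  | add x y _ _ hx hy => rw [map_add]; exact Submodule.add_mem _ hx hy
  | smul a x _ hx => rw [map_smul]; exact Submodule.smul_mem _ _ hx

end AlgPart
noncomputable section AlgPart2

open MvPolynomial

variable {K : Type*} [Field K] {n m : ℕ}

lemma smul_mval (d : Fin n →₀ ℕ) (p : Fin m × (Fin n →₀ ℕ)) :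
    (monomial d (1 : K)) • mval K p = mval K (p.1, d + p.2) := by
  funext j
  simp only [mval, Pi.smul_apply, smul_eq_mul]
  rcases eq_or_ne j p.1 with h | h
  · subst h
    simp only [Pi.single_eq_same]
    rw [monomial_mul, one_mul]
  · simp only [Pi.single_eq_of_ne h, mul_zero]

lemma mdeg_add (e : Fin m → ℕ) (d : Fin n →₀ ℕ) (p : Fin m × (Fin n →₀ ℕ)) :
    mdeg e (p.1, d + p.2) = (d.sum fun _ k => k) + mdeg e p := by
  unfold mdeg
  rw [Finsupp.sum_add_index' (fun _ => rfl) (fun _ _ _ => rfl)]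
  dsimp only
  omega

/-- multiplication by a monomial as a `K`-linear map -/
def monMul (d : Fin n →₀ ℕ) : FreeMod K n m →ₗ[K] FreeMod K n m where
  toFun f := (monomial d (1 : K)) • f
  map_add' f g := smul_add _ f g
  map_smul' a f := (smul_comm a (monomial d (1:K)) f).symm

lemma monMul_mem_degComp {e : Fin m → ℕ} (d : Fin n →₀ ℕ) {c : ℕ} {h : FreeMod K n m}
    (hh : h ∈ degComp K n m e c) :
    (monomial d (1 : K)) • h ∈ degComp K n m e ((d.sum fun _ k => k) + c) := by
  have hle : degComp K n m e c ≤
      (degComp K n m e ((d.sum fun _ k => k) + c)).comap (monMul (K := K) (m := m) d) := by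
    rw [degComp]
    rw [Submodule.span_le]
    rintro f ⟨p, hp, rfl⟩
    simp only [SetLike.mem_coe, Submodule.mem_comap, monMul, LinearMap.coe_mk, AddHom.coe_mk]
    rw [smul_mval]
    exact Submodule.subset_span ⟨(p.1, d + p.2), by rw [mdeg_add, hp], rfl⟩
  exact hle hh

lemma cone_li {h : FreeMod K n m} (hne : h ≠ 0) :
    LinearIndependent K (fun d : Fin n →₀ ℕ => (monomial d (1 : K)) • h) := by
  rw [linearIndependent_iff]
  intro l hl
  have key : Finsupp.linearCombination K (fun d : Fin n →₀ ℕ => (monomial d (1 : K)) • h) l =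
      (∑ d ∈ l.support, monomial d (l d)) • h := by
    rw [Finsupp.linearCombination_apply, Finsupp.sum, Finset.sum_smul]
    apply Finset.sum_congr rfl
    intro d _
    rw [← smul_assoc, smul_monomial, smul_eq_mul, mul_one]
  rw [key] at hl
  set p : MvPolynomial (Fin n) K := ∑ d ∈ l.support, monomial d (l d) with hp
  have hp0 : p = 0 := by
    obtain ⟨j, hj⟩ : ∃ j, h j ≠ 0 := by
      by_contra hcon
      push_neg at hcon
      exact hne (funext hcon)
    have : p * h j = 0 := by
      have := congrFun hl j
      simpa using this
    rcases mul_eq_zero.mp this with h' | h'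
    · exact h'
    · exact absurd h' hj
  ext d
  have : MvPolynomial.coeff d p = l d := by
    rw [hp, MvPolynomial.coeff_sum]
    rw [Finset.sum_congr rfl (fun x _ => MvPolynomial.coeff_monomial d x (l x))]
    rw [Finset.sum_ite_eq' l.support d (fun x => l x)]
    by_cases hd : d ∈ l.support
    · rw [if_pos hd]
    · rw [if_neg hd, Finsupp.notMem_support_iff.mp hd]
  rw [hp0] at this
  simp only [MvPolynomial.coeff_zero] at this
  simp [← this]

end AlgPart2
noncomputable section AlgPart3

open MvPolynomial

variable {K : Type*} [Field K] {n m : ℕ}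

lemma projZ_cone {e : Fin m → ℕ} {z c : ℕ} {h : FreeMod K n m} {u : Finset (Fin n)}
    (hh : h ∈ degComp K n m e c) {f : FreeMod K n m}
    (hf : f ∈ cone K h (↑u : Set (Fin n))) :
    projZ e z f ∈ cone K h (↑u : Set (Fin n)) := by
  induction hf using Submodule.span_induction with
  | mem x hx =>
    obtain ⟨d, hd, rfl⟩ := hx
    have hmem := monMul_mem_degComp (e := e) d hh
    by_cases hz : (d.sum fun _ k => k) + c = z
    · rw [projZ_of_mem (hz ▸ hmem)]
      exact Submodule.subset_span ⟨d, hd, rfl⟩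
    · rw [projZ_of_mem_ne hz hmem]
      exact Submodule.zero_mem _
  | zero => simp
  | add x y _ _ hx hy => rw [map_add]; exact Submodule.add_mem _ hx hy
  | smul a x _ hx => rw [map_smul]; exact Submodule.smul_mem _ _ hx

lemma cone_inter_degComp {e : Fin m → ℕ} {z c : ℕ} {h : FreeMod K n m} {u : Finset (Fin n)}
    (hh : h ∈ degComp K n m e c) :
    cone K h (↑u : Set (Fin n)) ⊓ degComp K n m e z =
      Submodule.span K ((fun d : Fin n →₀ ℕ => (monomial d (1 : K)) • h) ''
        {d | ↑d.support ⊆ (↑u : Set (Fin n)) ∧ (d.sum fun _ k => k) + c = z}) := by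
  apply le_antisymm
  · rintro f ⟨hf1, hf2⟩
    obtain ⟨N, coe, g, hsum⟩ := Submodule.mem_span_set'.mp hf1
    have hrep : ∀ i : Fin N, ∃ d : Fin n →₀ ℕ, ↑d.support ⊆ (↑u : Set (Fin n)) ∧
        (g i : FreeMod K n m) = (monomial d (1 : K)) • h := fun i => (g i).2
    choose dd hdd1 hdd2 using hrep
    have : f = projZ e z f := (projZ_of_mem hf2).symm
    rw [this, ← hsum, map_sum]
    apply Submodule.sum_mem
    intro i _
    rw [map_smul]
    apply Submodule.smul_mem
    rw [hdd2 i]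
    have hmem := monMul_mem_degComp (e := e) (dd i) hh
    by_cases hz : ((dd i).sum fun _ k => k) + c = z
    · rw [projZ_of_mem (hz ▸ hmem)]
      exact Submodule.subset_span ⟨dd i, ⟨hdd1 i, hz⟩, rfl⟩
    · rw [projZ_of_mem_ne hz hmem]
      exact Submodule.zero_mem _
  · rw [Submodule.span_le]
    rintro f ⟨d, ⟨hd1, hd2⟩, rfl⟩
    refine ⟨Submodule.subset_span ⟨d, hd1, rfl⟩, ?_⟩
    have := monMul_mem_degComp (e := e) d hh
    rwa [hd2] at this

end AlgPart3
noncomputable section AlgPart4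

open MvPolynomial

variable {K : Type*} [Field K] {n : ℕ}

lemma sum_subtypeDomain {s : Set (Fin n)} (f : Fin n →₀ ℕ) (hf : ↑f.support ⊆ s) :
    ((Finsupp.subtypeDomain (· ∈ s) f).sum fun _ k => k) = f.sum fun _ k => k := by
  classical
  rw [Finsupp.sum, Finsupp.sum, Finsupp.support_subtypeDomain]
  simp only [Finsupp.subtypeDomain_apply]
  rw [Finset.sum_subtype_eq_sum_filter]
  congr 1
  rw [Finset.filter_true_of_mem]
  intro x hx
  exact hf hx

/-- Finsupps with fixed total degree `w` correspond to `Sym α w`. -/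
def sumEquivSym (α : Type*) [DecidableEq α] (w : ℕ) :
    {g : α →₀ ℕ // (g.sum fun _ k => k) = w} ≃ Sym α w where
  toFun := fun g => ⟨Finsupp.toMultiset g.1, by
    rw [Finsupp.card_toMultiset]; exact g.2⟩
  invFun := fun s => ⟨Multiset.toFinsupp s.1, by
    have h1 : Finsupp.toMultiset (Multiset.toFinsupp s.1) = s.1 :=
      Multiset.toFinsupp_toMultiset s.1
    have hc := Finsupp.card_toMultiset (Multiset.toFinsupp s.1)
    rw [h1] at hc
    have h2 := s.2
    rw [hc] at h2
    exact h2⟩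
  left_inv := fun g => by
    apply Subtype.ext
    exact Finsupp.toMultiset_toFinsupp g.1
  right_inv := fun s => by
    apply Subtype.ext
    exact Multiset.toFinsupp_toMultiset s.1

/-- Monomials supported in `u` with total degree `w` are counted by `Sym ↥u w`. -/
def countEquiv (u : Finset (Fin n)) (w : ℕ) :
    {d : Fin n →₀ ℕ // ↑d.support ⊆ (↑u : Set (Fin n)) ∧ (d.sum fun _ k => k) = w} ≃
      Sym (↑u : Set (Fin n)) w := by
  classical
  have E1 : {d : Fin n →₀ ℕ // ↑d.support ⊆ (↑u : Set (Fin n)) ∧ (d.sum fun _ k => k) = w} ≃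
      {x : {d : Fin n →₀ ℕ // ↑d.support ⊆ (↑u : Set (Fin n))} //
        ((x : Fin n →₀ ℕ).sum fun _ k => k) = w} :=
    (Equiv.subtypeSubtypeEquivSubtypeInter
      (fun d : Fin n →₀ ℕ => ↑d.support ⊆ (↑u : Set (Fin n)))
      (fun d => (d.sum fun _ k => k) = w)).symm
  have E2 : {x : {d : Fin n →₀ ℕ // ↑d.support ⊆ (↑u : Set (Fin n))} //
        ((x : Fin n →₀ ℕ).sum fun _ k => k) = w} ≃
      {g : (↑u : Set (Fin n)) →₀ ℕ // (g.sum fun _ k => k) = w} :=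
    Equiv.subtypeEquiv (Finsupp.restrictSupportEquiv (↑u : Set (Fin n)) ℕ)
      (fun x => by
        rw [show ((Finsupp.restrictSupportEquiv (↑u : Set (Fin n)) ℕ) x).sum (fun _ k => k) =
          x.1.sum (fun _ k => k) from sum_subtypeDomain x.1 x.2])
  exact (E1.trans E2).trans (sumEquivSym _ w)

lemma count_card (u : Finset (Fin n)) (w : ℕ) :
    Nat.card {d : Fin n →₀ ℕ // ↑d.support ⊆ (↑u : Set (Fin n)) ∧ (d.sum fun _ k => k) = w} =
      (u.card + w - 1).choose w := by
  classical
  rw [Nat.card_congr (countEquiv u w), Nat.card_eq_fintype_card,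
    Sym.card_sym_eq_multichoose, Nat.multichoose_eq]
  congr 2
  simp

end AlgPart4
noncomputable section AlgMain

open MvPolynomial

variable {K : Type*} [Field K] {n m : ℕ}

lemma finite_D (u : Finset (Fin n)) (c z : ℕ) :
    Finite {d : Fin n →₀ ℕ // ↑d.support ⊆ (↑u : Set (Fin n)) ∧
      (d.sum fun _ k => k) + c = z} := by
  classical
  haveI : Finite {d : Fin n →₀ ℕ // ↑d.support ⊆ (↑u : Set (Fin n)) ∧
      (d.sum fun _ k => k) = z - c} := Finite.of_equiv _ (countEquiv u (z - c)).symm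
  refine Finite.of_injective
    (β := {d : Fin n →₀ ℕ // ↑d.support ⊆ (↑u : Set (Fin n)) ∧ (d.sum fun _ k => k) = z - c})
    (fun d => ⟨d.1, d.2.1, by have := d.2.2; omega⟩) ?_
  intro a b hab
  simp only [Subtype.mk.injEq] at hab
  exact Subtype.ext hab

lemma card_D (u : Finset (Fin n)) {c z : ℕ} (hcz : c ≤ z) :
    Nat.card {d : Fin n →₀ ℕ // ↑d.support ⊆ (↑u : Set (Fin n)) ∧
        (d.sum fun _ k => k) + c = z} =
      (u.card + (z - c) - 1).choose (z - c) := by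
  rw [Nat.card_congr (Equiv.subtypeEquivRight
    (q := fun d : Fin n →₀ ℕ => ↑d.support ⊆ (↑u : Set (Fin n)) ∧ (d.sum fun _ k => k) = z - c)
    (fun d => and_congr_right (fun _ => by omega)))]
  exact count_card u (z - c)

lemma hilb_eq_sum (e : Fin m → ℕ) (T : Submodule K (FreeMod K n m))
    (P : Finset (ConeData K n m)) (hdec : IsConeDecomp K e P T)
    {z : ℕ} (hdeg : ∀ c ∈ P, c.2.2 ≤ z) :
    hilb K e T z = ∑ c ∈ P, (c.2.1.card + (z - c.2.2) - 1).choose (z - c.2.2) := by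
  classical
  obtain ⟨hpiv, hind, hsup⟩ := hdec
  set D : ConeData K n m → Set (Fin n →₀ ℕ) := fun c =>
    {d | ↑d.support ⊆ (↑c.2.1 : Set (Fin n)) ∧ (d.sum fun _ k => k) + c.2.2 = z} with hD
  haveI hfin : ∀ c : ConeData K n m, Finite (D c) := fun c => finite_D c.2.1 c.2.2 z
  set V : (c : {x // x ∈ P}) → D c.1 → FreeMod K n m :=
    fun c d => (monomial (d : Fin n →₀ ℕ) (1 : K)) • c.1.1 with hV
  have hspan : ∀ c : {x // x ∈ P}, Submodule.span K (Set.range (V c)) =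
      cone K c.1.1 ↑c.1.2.1 ⊓ degComp K n m e z := by
    intro c
    rw [cone_inter_degComp (hpiv c.1 c.2).2, Set.image_eq_range]
  have hli : LinearIndependent K
      (fun x : Σ c : {x // x ∈ P}, D c.1 => V x.1 x.2) := by
    apply linearIndependent_iUnion_finite (f := V)
    · intro c
      exact (cone_li (hpiv c.1 c.2).1).comp _ Subtype.coe_injective
    · intro i t _ hit
      have h1 : Submodule.span K (Set.range (V i)) ≤ cone K i.1.1 ↑i.1.2.1 := by
        rw [hspan]; exact inf_le_left
      have h2 : (⨆ j ∈ t, Submodule.span K (Set.range (V j))) ≤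
          ⨆ j, ⨆ (_ : j ≠ i), cone K j.1.1 ↑j.1.2.1 := by
        refine iSup₂_le fun j hj => ?_
        have hj1 : Submodule.span K (Set.range (V j)) ≤ cone K j.1.1 ↑j.1.2.1 := by
          rw [hspan]; exact inf_le_left
        have hji : j ≠ i := fun hji => hit (hji ▸ hj)
        exact le_trans hj1 (le_iSup₂ (f := fun (j : {x // x ∈ P}) (_ : j ≠ i) =>
          cone K j.1.1 ↑j.1.2.1) j hji)
      exact Disjoint.mono h1 h2 ((iSupIndep_def.mp hind) i)
  have hbig : Submodule.span K
      (Set.range fun x : Σ c : {x // x ∈ P}, D c.1 => V x.1 x.2) =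
      T ⊓ degComp K n m e z := by
    rw [Set.range_sigma_eq_iUnion_range, Submodule.span_iUnion]
    simp_rw [hspan]
    apply le_antisymm
    · refine iSup_le fun c => le_inf (le_trans inf_le_left ?_) inf_le_right
      rw [← hsup]
      exact le_iSup (fun c : {x // x ∈ P} => cone K c.1.1 ↑c.1.2.1) c
    · rintro x hx
      rw [Submodule.mem_inf] at hx
      obtain ⟨hxT, hxz⟩ := hx
      rw [← hsup, Submodule.mem_iSup_iff_exists_finsupp] at hxT
      obtain ⟨f, hf, hfsum⟩ := hxT
      have hx' : x = projZ e z x := (projZ_of_mem hxz).symm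
      rw [hx', ← hfsum, map_finsuppSum]
      apply Submodule.finsuppSum_mem
      intro c _
      have h1 : projZ e z (f c) ∈ cone K c.1.1 ↑c.1.2.1 :=
        projZ_cone (hpiv c.1 c.2).2 (hf c)
      have h2 : projZ e z (f c) ∈ degComp K n m e z := projZ_mem e z (f c)
      exact Submodule.mem_iSup_of_mem c (Submodule.mem_inf.mpr ⟨h1, h2⟩)
  haveI : ∀ c : {x // x ∈ P}, Fintype (D c.1) := fun c => Fintype.ofFinite _
  have hr : hilb K e T z = Fintype.card (Σ c : {x // x ∈ P}, D c.1) := by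
    unfold hilb
    rw [← hbig, finrank_span_eq_card hli]
  rw [hr, Fintype.card_sigma, Finset.univ_eq_attach,
    ← Finset.sum_attach P (fun c => (c.2.1.card + (z - c.2.2) - 1).choose (z - c.2.2))]
  apply Finset.sum_congr rfl
  intro c _
  rw [← Nat.card_eq_fintype_card]
  have : Nat.card (D c.1) = ((c.1).2.1.card + (z - (c.1).2.2) - 1).choose (z - (c.1).2.2) :=
    card_D c.1.2.1 (hdeg c.1 c.2)
  exact this

end AlgMain
/-- For a `q`-exact cone decomposition `P` of a graded subspace `T` with
Macaulay constants `b₀,…,b_{n+1}`, for all `z ≥ b₀`: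
`HF_T(z) = binom(z − b_{n+1} + n, n) − 1 − ∑_{i=1}^n binom(z − b_i + i − 1, i)`. -/
theorem stmt_7 (K : Type*) [Field K] (n m q : ℕ) (e : Fin m → ℕ)
    (T : Submodule K (FreeMod K n m)) (P : Finset (ConeData K n m))
    (hdec : IsConeDecomp K e P T) (hex : IsExact K q P) :
    ∀ z : ℕ, macaulay K q P 0 ≤ z →
      (hilb K e T z : ℤ) =
        ((z - macaulay K q P (n + 1) + n).choose n : ℤ) - 1 -
          ∑ i ∈ Finset.Icc 1 n, ((z - macaulay K q P i + i - 1).choose i : ℤ) := by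
  intro z hz
  have hdeg : ∀ c ∈ P, c.2.2 ≤ z := fun c hc => by
    have := le_macaulay (K := K) q P 0 hc (Nat.zero_le _)
    omega
  rw [hilb_eq_sum e T P hdec hdeg]
  exact comb_main q P hex z hz
end

section
/- Let P and Q be q-exact cone decompositions of graded K-subspaces T and T' of graded free modules over S = K[x_1,...,x_n] (with the same q). If T and T' have the same Hilbert polynomial, then P and Q have the same Macaulay constants b_1,...,b_{n+1}. -/
open MvPolynomial

namespace Stmt8Aux
open Finset

noncomputable section

variable {K : Type*} [Field K] {n m : ℕ}

lemma dsum_eq (d : Fin n →₀ ℕ) : (d.sum fun _ k => k) = d.degree := rfl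

lemma degree_add (γ d : Fin n →₀ ℕ) : (γ + d).degree = γ.degree + d.degree := by
  simp [Finsupp.degree_eq_weight_one, map_add]

/-- projection onto the degree `z` component -/
def proj (e : Fin m → ℕ) (z : ℕ) : FreeMod K n m →ₗ[K] FreeMod K n m where
  toFun f := fun j => if e j ≤ z then homogeneousComponent (z - e j) (f j) else 0
  map_add' f g := by
    funext j; by_cases h : e j ≤ z <;> simp [h]
  map_smul' a f := by
    funext j; by_cases h : e j ≤ z <;> simp [h]

lemma smul_single (c : MvPolynomial (Fin n) K) (j : Fin m) (x : MvPolynomial (Fin n) K) :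
    c • (Pi.single j x : FreeMod K n m) = Pi.single j (c * x) := by
  funext i
  rcases eq_or_ne i j with rfl | hij
  · simp
  · simp [Pi.single_eq_of_ne hij]

lemma monomial_smul_mval (γ : Fin n →₀ ℕ) (p : Fin m × (Fin n →₀ ℕ)) :
    (monomial γ (1:K)) • mval K p = mval K (p.1, γ + p.2) := by
  rw [mval, mval, smul_single, monomial_mul, one_mul]

lemma mdeg_add (e : Fin m → ℕ) (γ : Fin n →₀ ℕ) (p : Fin m × (Fin n →₀ ℕ)) :
    mdeg e (p.1, γ + p.2) = mdeg e p + γ.degree := by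
  simp only [mdeg, dsum_eq, degree_add]
  ring

lemma mval_mem_degComp (e : Fin m → ℕ) (p : Fin m × (Fin n →₀ ℕ)) :
    mval K p ∈ degComp K n m e (mdeg e p) :=
  Submodule.subset_span ⟨p, rfl, rfl⟩

lemma hc_monomial (w : ℕ) (d : Fin n →₀ ℕ) :
    homogeneousComponent w (monomial d (1:K)) = if d.degree = w then monomial d (1:K) else 0 := by
  ext d'
  rw [coeff_homogeneousComponent]
  rcases eq_or_ne d' d with rfl | hdd
  · simp only [coeff_monomial, if_pos rfl]
    split_ifs <;> simp_all [coeff_monomial]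
  · simp only [coeff_monomial, if_neg (Ne.symm hdd)]
    split_ifs <;> simp [coeff_monomial, if_neg (Ne.symm hdd)]

lemma proj_mval (e : Fin m → ℕ) (z : ℕ) (p : Fin m × (Fin n →₀ ℕ)) :
    proj e z (mval K p) = if mdeg e p = z then mval K p else 0 := by
  funext j
  rw [show ((if mdeg e p = z then mval K p else 0) j)
      = (if mdeg e p = z then mval K p j else 0) from apply_ite (fun g : FreeMod K n m => g j) _ _ _]
  simp only [proj, LinearMap.coe_mk, AddHom.coe_mk]
  rcases eq_or_ne j p.1 with rfl | hj
  · simp only [mval, Pi.single_eq_same, hc_monomial]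
    have hm : mdeg e p = (p.2.degree) + e p.1 := by simp [mdeg, dsum_eq]
    by_cases h1 : e p.1 ≤ z
    · simp only [if_pos h1]
      by_cases h2 : p.2.degree = z - e p.1
      · rw [if_pos h2, if_pos (by omega)]
      · rw [if_neg h2, if_neg (by omega)]
    · rw [if_neg h1, if_neg (by omega)]
  · simp [mval, Pi.single_eq_of_ne hj, ite_self]

end
end Stmt8Aux
namespace Stmt8Aux
open Finset

noncomputable section

variable {K : Type*} [Field K] {n m : ℕ}

lemma degComp_smul_mono {e : Fin m → ℕ} {D : ℕ} {h : FreeMod K n m}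
    (hh : h ∈ degComp K n m e D) (γ : Fin n →₀ ℕ) :
    (monomial γ (1:K)) • h ∈ degComp K n m e (D + γ.degree) := by
  induction hh using Submodule.span_induction with
  | mem x hx =>
    obtain ⟨p, hp, rfl⟩ := hx
    rw [monomial_smul_mval]
    have := mval_mem_degComp (K := K) e (p.1, γ + p.2)
    rwa [mdeg_add, hp] at this
  | zero => rw [smul_zero]; exact Submodule.zero_mem _
  | add x y hx hy ihx ihy => rw [smul_add]; exact Submodule.add_mem _ ihx ihy
  | smul a x hx ihx => rw [smul_comm]; exact Submodule.smul_mem _ _ ihx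

lemma proj_smul_of_mem {e : Fin m → ℕ} {D : ℕ} {h : FreeMod K n m}
    (hh : h ∈ degComp K n m e D) (γ : Fin n →₀ ℕ) (z : ℕ) :
    proj e z ((monomial γ (1:K)) • h) =
      if D + γ.degree = z then (monomial γ (1:K)) • h else 0 := by
  induction hh using Submodule.span_induction with
  | mem x hx =>
    obtain ⟨p, hp, rfl⟩ := hx
    rw [monomial_smul_mval, proj_mval, mdeg_add, hp]
  | zero => rw [smul_zero, map_zero, ite_self]
  | add x y hx hy ihx ihy =>
    rw [smul_add, map_add, ihx, ihy]
    split_ifs <;> simp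
  | smul a x hx ihx =>
    rw [smul_comm, map_smul, ihx]
    split_ifs
    · rfl
    · exact smul_zero a

lemma proj_eq_self_of_mem {e : Fin m → ℕ} {z : ℕ} {f : FreeMod K n m}
    (hf : f ∈ degComp K n m e z) : proj e z f = f := by
  induction hf using Submodule.span_induction with
  | mem x hx => obtain ⟨p, hp, rfl⟩ := hx; rw [proj_mval, if_pos hp]
  | zero => exact map_zero _
  | add x y hx hy ihx ihy => rw [map_add, ihx, ihy]
  | smul a x hx ihx => rw [map_smul, ihx]

/-- all exponent vectors with support in `u` and total degree `s` -/
def monos (u : Finset (Fin n)) (s : ℕ) : Finset (Fin n →₀ ℕ) :=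
  (Finset.univ : Finset (Sym {x // x ∈ u} s)).image
    fun σ => Multiset.toFinsupp (Multiset.map Subtype.val σ.val)

lemma mem_monos {u : Finset (Fin n)} {s : ℕ} {d : Fin n →₀ ℕ} :
    d ∈ monos u s ↔ (↑d.support ⊆ (↑u : Set (Fin n)) ∧ d.degree = s) := by
  constructor
  · rintro hd
    obtain ⟨σ, -, rfl⟩ := Finset.mem_image.mp hd
    constructor
    · intro x hx
      rw [Finset.mem_coe, Multiset.toFinsupp_support, Multiset.mem_toFinset] at hx
      obtain ⟨y, -, rfl⟩ := Multiset.mem_map.mp hx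
      exact Finset.mem_coe.mpr y.2
    · have h2 : (Multiset.toFinsupp (Multiset.map Subtype.val σ.val)).sum (fun _ => id)
          = Multiset.card (Multiset.map Subtype.val σ.val) := Multiset.toFinsupp_sum_eq _
      rw [Multiset.card_map, σ.2] at h2
      rw [← dsum_eq]
      exact h2
  · rintro ⟨hsupp, hdeg⟩
    apply Finset.mem_image.mpr
    have hmem : ∀ x ∈ d.toMultiset, x ∈ u := by
      intro x hx
      exact Finset.mem_coe.mp (hsupp (Finset.mem_coe.mpr ((Finsupp.mem_toMultiset d x).mp hx)))
    refine ⟨⟨(d.toMultiset.attach.map fun x => (⟨x.1, hmem x.1 x.2⟩ : {x // x ∈ u})), ?_⟩,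
      Finset.mem_univ _, ?_⟩
    · rw [Multiset.card_map, Multiset.card_attach, Finsupp.card_toMultiset]
      rw [show (d.sum fun _ => id) = d.degree from rfl, hdeg]
    · simp only [Multiset.map_map, Function.comp]
      rw [show (Multiset.map (fun x : {x // x ∈ d.toMultiset} => x.1) d.toMultiset.attach)
        = d.toMultiset from Multiset.attach_map_val d.toMultiset]
      exact Finsupp.toMultiset_toFinsupp d
end
end Stmt8Aux
namespace Stmt8Aux
open Finset

noncomputable section

variable {K : Type*} [Field K] {n m : ℕ}

lemma card_monos {u : Finset (Fin n)} (hu : 0 < u.card) (s : ℕ) :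
    (monos u s).card = Nat.choose (s + (u.card - 1)) (u.card - 1) := by
  classical
  have hinj : Function.Injective
      (fun σ : Sym {x // x ∈ u} s => Multiset.toFinsupp (Multiset.map Subtype.val σ.val)) := by
    intro σ τ h
    have := Multiset.toFinsupp.injective h
    have := Multiset.map_injective (Subtype.val_injective) this
    exact Subtype.ext this
  rw [monos, Finset.card_image_of_injective _ hinj, Finset.card_univ, Sym.card_sym_eq_choose,
    Fintype.card_coe]
  have h1 : u.card + s - 1 = s + (u.card - 1) := by omega
  rw [h1, ← Nat.choose_symm (show u.card - 1 ≤ s + (u.card - 1) by omega),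
    show s + (u.card - 1) - (u.card - 1) = s by omega]

lemma monos_empty_eq (s : ℕ) (hs : 0 < s) : (monos (∅ : Finset (Fin n)) s) = ∅ := by
  apply Finset.eq_empty_of_forall_notMem
  intro d hd
  obtain ⟨hsupp, hdeg⟩ := mem_monos.mp hd
  have : d.support = ∅ := by
    apply Finset.eq_empty_of_forall_notMem
    intro x hx
    simpa using hsupp (Finset.mem_coe.mpr hx)
  rw [Finsupp.support_eq_empty.mp this] at hdeg
  simp [map_zero] at hdeg
  omega

lemma cone_inf_degComp_eq {e : Fin m → ℕ} {D z : ℕ} {h : FreeMod K n m}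
    (hh : h ∈ degComp K n m e D) (u : Finset (Fin n)) (hz : D ≤ z) :
    cone K h ↑u ⊓ degComp K n m e z
      = Submodule.span K ((fun d : Fin n →₀ ℕ => (monomial d (1:K)) • h) '' ↑(monos u (z - D))) := by
  apply le_antisymm
  · rintro f ⟨hf1, hf2⟩
    rw [← proj_eq_self_of_mem hf2]
    clear hf2
    induction hf1 using Submodule.span_induction with
    | mem x hx =>
      obtain ⟨γ, hsupp, rfl⟩ := hx
      rw [proj_smul_of_mem hh]
      split_ifs with hcond
      · have hγ : γ ∈ (↑(monos u (z - D)) : Set (Fin n →₀ ℕ)) :=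
          Finset.mem_coe.mpr (mem_monos.mpr ⟨hsupp, by omega⟩)
        exact Submodule.subset_span ⟨γ, hγ, rfl⟩
      · exact Submodule.zero_mem _
    | zero => rw [map_zero]; exact Submodule.zero_mem _
    | add x y hx hy ihx ihy => rw [map_add]; exact Submodule.add_mem _ ihx ihy
    | smul a x hx ihx => rw [map_smul]; exact Submodule.smul_mem _ _ ihx
  · rw [Submodule.span_le]
    rintro f ⟨d, hd, rfl⟩
    obtain ⟨hsupp, hdeg⟩ := mem_monos.mp (Finset.mem_coe.mp hd)
    constructor
    · exact Submodule.subset_span ⟨d, hsupp, rfl⟩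
    · have := degComp_smul_mono hh d
      rwa [hdeg, show D + (z - D) = z by omega] at this

lemma li_cone {h : FreeMod K n m} (hh0 : h ≠ 0) (A : Finset (Fin n →₀ ℕ)) :
    LinearIndependent K (fun d : A => (monomial (d : Fin n →₀ ℕ) (1:K)) • h) := by
  rw [linearIndependent_iff']
  intro s g hsum i hi
  set Q : MvPolynomial (Fin n) K := ∑ i ∈ s, monomial (i : Fin n →₀ ℕ) (g i) with hQ
  have hQh : Q • h = 0 := by
    rw [← hsum, Finset.sum_smul]
    apply Finset.sum_congr rfl
    intro j _
    rw [← smul_assoc, MvPolynomial.smul_monomial, smul_eq_mul, mul_one]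
  have hQ0 : Q = 0 := by
    obtain ⟨j0, hj0⟩ := Function.ne_iff.mp hh0
    have : (Q • h) j0 = 0 := by rw [hQh]; rfl
    rw [Pi.smul_apply, smul_eq_mul] at this
    rcases mul_eq_zero.mp this with hq | hh
    · exact hq
    · exact absurd hh hj0
  have := congrArg (MvPolynomial.coeff (i : Fin n →₀ ℕ)) hQ0
  rw [hQ, MvPolynomial.coeff_sum] at this
  simp only [MvPolynomial.coeff_monomial, MvPolynomial.coeff_zero] at this
  rwa [Finset.sum_eq_single i (fun b _ hbi => if_neg (fun hc => hbi (Subtype.ext hc)))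
    (fun hnotin => absurd hi hnotin), if_pos rfl] at this

end
end Stmt8Aux
namespace Stmt8Aux
open Finset Module

noncomputable section

variable {K : Type*} [Field K] {n m : ℕ}

lemma finrank_cone_inf {e : Fin m → ℕ} {D z : ℕ} {h : FreeMod K n m} (hh0 : h ≠ 0)
    (hh : h ∈ degComp K n m e D) (u : Finset (Fin n)) (hz : D ≤ z) :
    finrank K ↥(cone K h ↑u ⊓ degComp K n m e z) = (monos u (z - D)).card := by
  rw [cone_inf_degComp_eq hh u hz]
  rw [Set.image_eq_range]
  have hli : LinearIndependent K
      (fun x : (↑(monos u (z - D)) : Set (Fin n →₀ ℕ)) => (monomial (x : Fin n →₀ ℕ) (1:K)) • h) :=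
    li_cone hh0 (monos u (z - D))
  rw [finrank_span_eq_card hli]
  simp

lemma degComp_fd (e : Fin m → ℕ) (z : ℕ) : FiniteDimensional K ↥(degComp K n m e z) := by
  apply FiniteDimensional.span_of_finite
  have : {f : FreeMod K n m | ∃ p, mdeg e p = z ∧ f = mval K p}
      ⊆ (mval K) '' ↑(Finset.univ.biUnion
          (fun j : Fin m => (monos Finset.univ (z - e j)).image fun d => ((j, d) : Fin m × (Fin n →₀ ℕ)))) := by
    rintro f ⟨p, hp, rfl⟩
    refine Set.mem_image_of_mem _ ?_
    rw [Finset.mem_coe, Finset.mem_biUnion]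
    refine ⟨p.1, Finset.mem_univ _, Finset.mem_image.mpr ⟨p.2, ?_, rfl⟩⟩
    apply mem_monos.mpr
    refine ⟨by simp, ?_⟩
    rw [mdeg, dsum_eq] at hp
    omega
  exact Set.Finite.subset (Set.Finite.image _ (Finset.finite_toSet _)) this

lemma finrank_iSup_eq_sum {V : Type*} [AddCommGroup V] [Module K V] {ι : Type*} [Fintype ι]
    (W : ι → Submodule K V) (hW : iSupIndep W) (hfd : ∀ i, FiniteDimensional K ↥(W i)) :
    finrank K ↥(⨆ i, W i) = ∑ i, finrank K ↥(W i) := by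
  classical
  have main : ∀ s : Finset ι, finrank K ↥(s.sup W) = ∑ i ∈ s, finrank K ↥(W i) := by
    intro s
    induction s using Finset.induction_on with
    | empty => simp
    | @insert a s ha ih =>
      have hdisj : Disjoint (W a) (s.sup W) := by
        refine (hW a).mono_right ?_
        apply Finset.sup_le
        intro j hj
        exact le_iSup₂ (f := fun (j : ι) (_ : j ≠ a) => W j) j (fun hja => ha (hja ▸ hj))
      haveI : FiniteDimensional K ↥(W a) := hfd a
      haveI : FiniteDimensional K ↥(s.sup W) := Submodule.finiteDimensional_finset_sup s W
      rw [Finset.sup_insert, Finset.sum_insert ha, ← ih]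
      have := Submodule.finrank_sup_add_finrank_inf_eq (W a) (s.sup W)
      rw [disjoint_iff.mp hdisj, finrank_bot, add_zero] at this
      exact this
  have huniv : (⨆ i, W i) = Finset.univ.sup W := by
    apply le_antisymm
    · exact iSup_le fun i => Finset.le_sup (Finset.mem_univ i)
    · exact Finset.sup_le fun i _ => le_iSup W i
  rw [huniv, main]

lemma hilb_eq_sum {e : Fin m → ℕ} {P : Finset (ConeData K n m)} {T : Submodule K (FreeMod K n m)}
    (hdec : IsConeDecomp K e P T) (z : ℕ) :
    hilb K e T z = ∑ c ∈ P, finrank K ↥(cone K c.1 ↑c.2.1 ⊓ degComp K n m e z) := by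
  obtain ⟨hpiv, hind, hsup⟩ := hdec
  have key : T ⊓ degComp K n m e z = ⨆ c : P, (cone K c.1.1 ↑c.1.2.1 ⊓ degComp K n m e z) := by
    apply le_antisymm
    · rintro f ⟨hfT, hfz⟩
      rw [← proj_eq_self_of_mem hfz]
      clear hfz
      rw [← hsup] at hfT
      induction hfT using Submodule.iSup_induction' with
      | mem c x hx =>
        refine Submodule.mem_iSup_of_mem c ?_
        induction hx using Submodule.span_induction with
        | mem y hy =>
          obtain ⟨γ, hsupp, rfl⟩ := hy
          rw [proj_smul_of_mem (hpiv c c.2).2]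
          split_ifs with hcond
          · exact ⟨Submodule.subset_span ⟨γ, hsupp, rfl⟩,
              hcond ▸ degComp_smul_mono (hpiv c c.2).2 γ⟩
          · exact Submodule.zero_mem _
        | zero => rw [map_zero]; exact Submodule.zero_mem _
        | add x y hx hy ihx ihy => rw [map_add]; exact Submodule.add_mem _ ihx ihy
        | smul a x hx ihx => rw [map_smul]; exact Submodule.smul_mem _ _ ihx
      | zero => rw [map_zero]; exact Submodule.zero_mem _
      | add x y hx hy ihx ihy => rw [map_add]; exact Submodule.add_mem _ ihx ihy
    · refine iSup_le fun c => le_inf (le_trans inf_le_left ?_) inf_le_right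
      rw [← hsup]
      exact le_iSup (fun c : P => cone K c.1.1 ↑c.1.2.1) c
  rw [hilb, key]
  haveI : ∀ c : P, FiniteDimensional K ↥(cone K c.1.1 ↑c.1.2.1 ⊓ degComp K n m e z) :=
    fun c => @Submodule.finiteDimensional_of_le _ _ _ _ _ _ _ (degComp_fd e z) inf_le_right
  rw [finrank_iSup_eq_sum _ (hind.mono (fun c => inf_le_left)) (fun c => inferInstance)]
  exact Finset.sum_coe_sort P (fun c => finrank K ↥(cone K c.1 ↑c.2.1 ⊓ degComp K n m e z))

end
end Stmt8Aux
namespace Stmt8Aux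
open Finset Module

noncomputable section

variable {K : Type*} [Field K] {n m : ℕ}

lemma hockey1 (s : ℕ) : ∀ M : ℕ, Nat.choose (M + s) s = ∑ k ∈ range (s+1), Nat.choose (M + k - 1) k := by
  induction s with
  | zero => intro M; simp
  | succ s ih =>
    intro M
    rw [Finset.sum_range_succ, ← ih M]
    have h1 : M + (s + 1) - 1 = M + s := by omega
    rw [h1, ← Nat.choose_succ_succ' (M + s) s, ← Nat.add_assoc]

lemma hockey2 (q k : ℕ) : ∀ b, q ≤ b → ∀ z : ℕ, b ≤ z →
    (∑ d ∈ Finset.Ico q b, Nat.choose ((z - d) + k - 1) k) + Nat.choose ((z - b) + k) (k+1)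
      = Nat.choose ((z - q) + k) (k+1) := by
  intro b hqb
  induction b, hqb using Nat.le_induction with
  | base =>
    intro z hz
    simp
  | succ b hqb ih =>
    intro z hz
    rw [Finset.sum_Ico_succ_top hqb]
    have h1 : (z - (b+1)) + k = (z - b) + k - 1 := by omega
    have h2 : (z - b) + k = ((z - b) + k - 1) + 1 := by omega
    rw [h1, add_assoc, ← Nat.choose_succ_succ' ((z - b) + k - 1) k, ← h2]
    exact ih z (by omega)

variable {q : ℕ} {e : Fin m → ℕ} {P : Finset (ConeData K n m)} {T : Submodule K (FreeMod K n m)}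

lemma filter_bij (hst : IsStandard K q P)
    (hex : ∀ c ∈ P, ∀ c' ∈ P, 0 < c.2.1.card → 0 < c'.2.1.card → c ≠ c' → c.2.2 ≠ c'.2.2)
    (k : ℕ) (g : ℕ → ℕ) :
    ∑ c ∈ P.filter (fun c => k + 1 ≤ c.2.1.card), g c.2.2
      = ∑ d ∈ Finset.Ico q (macaulay K q P (k+1)), g d := by
  set b := macaulay K q P (k+1) with hb
  apply Finset.sum_bij (fun c _ => c.2.2)
  · -- maps into Ico
    intro c hc
    rw [Finset.mem_filter] at hc
    obtain ⟨hcP, hck⟩ := hc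
    rw [Finset.mem_Ico]
    constructor
    · exact hst.1 c hcP (by omega)
    · have h1 : c.2.2 + 1 ≤ (P.filter (fun c => k + 1 ≤ c.2.1.card)).sup (fun c => c.2.2 + 1) :=
        Finset.le_sup (f := fun c : ConeData K n m => c.2.2 + 1)
          (s := P.filter (fun c => k + 1 ≤ c.2.1.card)) (Finset.mem_filter.mpr ⟨hcP, hck⟩)
      have h2 : _ ≤ b := le_max_right q _
      omega
  · -- injective
    intro c hc c' hc' heq
    rw [Finset.mem_filter] at hc hc'
    by_contra hne
    exact hex c hc.1 c' hc'.1 (by omega) (by omega) hne heq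
  · -- surjective
    intro d hd
    rw [Finset.mem_Ico] at hd
    have hsup : ¬ ((P.filter (fun c => k + 1 ≤ c.2.1.card)).sup (fun c => c.2.2 + 1) ≤ d) := by
      intro hle
      have : b ≤ max q d := max_le_max le_rfl hle
      simp only [hb] at this
      omega
    obtain ⟨c, hc, hcd⟩ : ∃ c ∈ P.filter (fun c => k + 1 ≤ c.2.1.card), ¬ (c.2.2 + 1 ≤ d) := by
      by_contra hall
      push_neg at hall
      exact hsup (Finset.sup_le fun c hc => hall c hc)
    rw [Finset.mem_filter] at hc
    obtain ⟨c', hc'P, hc'd, hc'card⟩ := hst.2 c hc.1 (by omega) d hd.1 (by omega)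
    exact ⟨c', Finset.mem_filter.mpr ⟨hc'P, by omega⟩, hc'd⟩
  · intro c hc
    rfl

lemma decomp_formula (hdec : IsConeDecomp K e P T) (hst : IsStandard K q P)
    (hex : ∀ c ∈ P, ∀ c' ∈ P, 0 < c.2.1.card → 0 < c'.2.1.card → c ≠ c' → c.2.2 ≠ c'.2.2)
    (z : ℕ) (hz1 : ∀ c ∈ P, c.2.2 < z) (hz2 : macaulay K q P 1 ≤ z) (hzq : q ≤ z) :
    hilb K e T z + ∑ k ∈ range n, Nat.choose ((z - macaulay K q P (k+1)) + k) (k+1)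
      = ∑ k ∈ range n, Nat.choose ((z - q) + k) (k+1) := by
  rw [hilb_eq_sum hdec]

  have percone : ∀ c ∈ P, finrank K ↥(cone K c.1 ↑c.2.1 ⊓ degComp K n m e z)
      = ∑ k ∈ range c.2.1.card, Nat.choose ((z - c.2.2) + k - 1) k := by
    intro c hc
    have hfr := finrank_cone_inf (hdec.1 c hc).1 (hdec.1 c hc).2 c.2.1 (le_of_lt (hz1 c hc))
    rcases Nat.eq_zero_or_pos c.2.1.card with h0 | hpos
    · rw [h0, Finset.range_zero, Finset.sum_empty, hfr,
        Finset.card_eq_zero.mp h0, monos_empty_eq _ (by have := hz1 c hc; omega)]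
      simp
    · rw [hfr, card_monos hpos]
      have hform := hockey1 (c.2.1.card - 1) (z - c.2.2)
      rw [show c.2.1.card - 1 + 1 = c.2.1.card by omega] at hform
      rw [← hform]
  rw [Finset.sum_congr rfl percone]
  -- swap the double sum
  have hcard : ∀ c : ConeData K n m, c.2.1.card ≤ n := by
    intro c
    simpa using Finset.card_le_univ c.2.1
  have swap1 : ∀ c ∈ P, ∑ k ∈ range c.2.1.card, Nat.choose ((z - c.2.2) + k - 1) k
      = ∑ k ∈ range n, if k + 1 ≤ c.2.1.card then Nat.choose ((z - c.2.2) + k - 1) k else 0 := by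
    intro c hc
    rw [← Finset.sum_filter]
    congr 1
    ext k
    simp only [Finset.mem_filter, Finset.mem_range]
    constructor
    · intro hk; exact ⟨by have := hcard c; omega, by omega⟩
    · rintro ⟨h1, h2⟩; omega
  rw [Finset.sum_congr rfl swap1, Finset.sum_comm]
  have inner : ∀ k ∈ range n,
      (∑ c ∈ P, if k + 1 ≤ c.2.1.card then Nat.choose ((z - c.2.2) + k - 1) k else 0)
        = ∑ d ∈ Finset.Ico q (macaulay K q P (k+1)), Nat.choose ((z - d) + k - 1) k := by
    intro k _
    rw [← Finset.sum_filter]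
    exact filter_bij hst hex k (fun d => Nat.choose ((z - d) + k - 1) k)
  rw [Finset.sum_congr rfl inner, ← Finset.sum_add_distrib]
  apply Finset.sum_congr rfl
  intro k hk
  have hble : macaulay K q P (k+1) ≤ macaulay K q P 1 := by
    apply max_le (le_max_left _ _)
    apply le_trans _ (le_max_right q _)
    apply Finset.sup_mono
    intro c hc
    rw [Finset.mem_filter] at *
    exact ⟨hc.1, by omega⟩
  have hqb : q ≤ macaulay K q P (k+1) := le_max_left _ _
  exact hockey2 q k (macaulay K q P (k+1)) hqb z (by omega)

end
end Stmt8Aux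
namespace Stmt8Aux
open Finset Module

def Sfun (β : ℕ → ℕ) (N z : ℕ) : ℕ :=
  ∑ j ∈ Finset.range N, Nat.choose ((z - β (j+1)) + j) (j+1)

lemma Sstep (β : ℕ → ℕ) (N z : ℕ) (hz : ∀ j, j < N + 1 → β (j+1) ≤ z) :
    Sfun β (N+1) (z+1) = Sfun β (N+1) z + (1 + Sfun (fun k => β (k+1)) N (z+1)) := by
  have h1 : ∑ j ∈ Finset.range (N+1), Nat.choose ((z + 1 - β (j+1)) + j) (j+1)
      = ∑ j ∈ Finset.range (N+1),
          (Nat.choose ((z - β (j+1)) + j) (j+1) + Nat.choose ((z - β (j+1)) + j) j) := by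
    apply Finset.sum_congr rfl
    intro j hj
    rw [Finset.mem_range] at hj
    have hb := hz j hj
    rw [show (z + 1 - β (j+1)) + j = ((z - β (j+1)) + j) + 1 by omega,
      Nat.choose_succ_succ' ((z - β (j+1)) + j) j]
    exact Nat.add_comm _ _
  have h2 : ∑ j ∈ Finset.range (N+1), Nat.choose ((z - β (j+1)) + j) j
      = 1 + ∑ j ∈ Finset.range N, Nat.choose ((z + 1 - β (j+1+1)) + j) (j+1) := by
    rw [Finset.sum_range_succ']
    have h3 : ∀ j ∈ Finset.range N, Nat.choose ((z - β (j+1+1)) + (j+1)) (j+1)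
        = Nat.choose ((z + 1 - β (j+1+1)) + j) (j+1) := by
      intro j hj
      rw [Finset.mem_range] at hj
      have hb := hz (j+1) (by omega)
      congr 1
      omega
    rw [Finset.sum_congr rfl h3]
    have h4 : Nat.choose ((z - β (0+1)) + 0) 0 = 1 := Nat.choose_zero_right _
    omega
  simp only [Sfun]
  rw [h1, Finset.sum_add_distrib, h2]

lemma Sinj : ∀ (N : ℕ) (β β' : ℕ → ℕ) (M : ℕ),
    (∀ z, M ≤ z → Sfun β N z = Sfun β' N z) → ∀ k, 1 ≤ k → k ≤ N → β k = β' k := by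
  intro N
  induction N with
  | zero => intro β β' M h k h1 h2; omega
  | succ N ih =>
    intro β β' M hS k hk1 hk2
    set C := M + (∑ j ∈ Finset.range (N+1), (β (j+1) + β' (j+1))) with hC
    have hbound : ∀ j, j < N+1 → β (j+1) ≤ C ∧ β' (j+1) ≤ C := by
      intro j hj
      have h : β (j+1) + β' (j+1) ≤ ∑ j ∈ Finset.range (N+1), (β (j+1) + β' (j+1)) :=
        Finset.single_le_sum (f := fun j => β (j+1) + β' (j+1))
          (fun i _ => Nat.zero_le _) (Finset.mem_range.mpr hj)
      omega
    have htail : ∀ w, C + 1 ≤ w → Sfun (fun k => β (k+1)) N w = Sfun (fun k => β' (k+1)) N w := by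
      intro w hw
      obtain ⟨z, rfl⟩ : ∃ z, w = z + 1 := ⟨w - 1, by omega⟩
      have e1 := Sstep β N z (fun j hj => (hbound j hj).1.trans (by omega))
      have e2 := Sstep β' N z (fun j hj => (hbound j hj).2.trans (by omega))
      have e3 := hS z (by omega)
      have e4 := hS (z+1) (by omega)
      omega
    have hhi : ∀ k', 1 ≤ k' → k' ≤ N → β (k'+1) = β' (k'+1) :=
      ih (fun k => β (k+1)) (fun k => β' (k+1)) (C+1) htail
    rcases Nat.lt_or_ge k 2 with hklt | hkge
    · -- k = 1
      have hk : k = 1 := by omega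
      subst hk
      have hz := hS C (by omega)
      rw [Sfun, Sfun, Finset.sum_range_succ', Finset.sum_range_succ'] at hz
      have htails : ∀ j ∈ Finset.range N,
          Nat.choose ((C - β (j+1+1)) + (j+1)) (j+1+1)
            = Nat.choose ((C - β' (j+1+1)) + (j+1)) (j+1+1) := by
        intro j hj
        rw [Finset.mem_range] at hj
        rw [hhi (j+1) (by omega) (by omega)]
      rw [Finset.sum_congr rfl htails] at hz
      have h01 : Nat.choose ((C - β (0+1)) + 0) (0+1) = C - β 1 := by
        rw [Nat.add_zero, Nat.choose_one_right]
      have h02 : Nat.choose ((C - β' (0+1)) + 0) (0+1) = C - β' 1 := by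
        rw [Nat.add_zero, Nat.choose_one_right]
      rw [h01, h02] at hz
      have hb1 : β 1 ≤ C := (hbound 0 (by omega)).1
      have hb2 : β' 1 ≤ C := (hbound 0 (by omega)).2
      omega
    · obtain ⟨k', rfl⟩ : ∃ k', k = k' + 1 := ⟨k - 1, by omega⟩
      exact hhi k' (by omega) (by omega)

end Stmt8Aux

/-- If `P`, `Q` are `q`-exact cone decompositions (same `q`) of graded
subspaces `T`, `T'` of graded free modules and `T`, `T'` have the same Hilbert polynomial
(i.e. eventually equal Hilbert functions), then they have the same Macaulay constants
`b₁,…,b_{n+1}`. -/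
theorem stmt_8 (K : Type*) [Field K] (n m m' q : ℕ) (e : Fin m → ℕ) (e' : Fin m' → ℕ)
    (T : Submodule K (FreeMod K n m)) (P : Finset (ConeData K n m))
    (T' : Submodule K (FreeMod K n m')) (Q : Finset (ConeData K n m'))
    (hdecP : IsConeDecomp K e P T) (hexP : IsExact K q P)
    (hdecQ : IsConeDecomp K e' Q T') (hexQ : IsExact K q Q)
    (hHP : ∃ N : ℕ, ∀ z : ℕ, N ≤ z → hilb K e T z = hilb K e' T' z) :
    ∀ k : ℕ, 1 ≤ k → k ≤ n + 1 → macaulay K q P k = macaulay K q Q k := by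
  classical
  intro k hk1 hk2
  rcases Nat.lt_or_ge k (n+1) with hlt | hge
  · -- case 1 ≤ k ≤ n
    obtain ⟨N, hN⟩ := hHP
    set N0 : ℕ := N + (P.sup (fun c => c.2.2) + 1) + (Q.sup (fun c => c.2.2) + 1)
      + macaulay K q P 1 + macaulay K q Q 1 + q with hN0
    have hS : ∀ z, N0 ≤ z → Stmt8Aux.Sfun (fun k => macaulay K q P k) n z
        = Stmt8Aux.Sfun (fun k => macaulay K q Q k) n z := by
      intro z hz
      have h1 := Stmt8Aux.decomp_formula hdecP hexP.1 hexP.2 z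
        (fun c hc => by
          have hcz : c.2.2 ≤ P.sup (fun c => c.2.2) :=
            Finset.le_sup (f := fun c : ConeData K n m => c.2.2) hc
          omega)
        (by omega) (by omega)
      have h2 := Stmt8Aux.decomp_formula hdecQ hexQ.1 hexQ.2 z
        (fun c hc => by
          have hcz : c.2.2 ≤ Q.sup (fun c => c.2.2) :=
            Finset.le_sup (f := fun c : ConeData K n m' => c.2.2) hc
          omega)
        (by omega) (by omega)
      have h3 := hN z (by omega)
      simp only [Stmt8Aux.Sfun]
      omega
    exact Stmt8Aux.Sinj n _ _ N0 hS k hk1 (by omega)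
  · -- case k = n + 1 : both sides are q
    have hk : k = n + 1 := by omega
    subst hk
    have hfilt : ∀ (m'' : ℕ) (R : Finset (ConeData K n m'')),
        R.filter (fun c => n + 1 ≤ c.2.1.card) = ∅ := by
      intro m'' R
      apply Finset.filter_false_of_mem
      intro c hc
      have hle : c.2.1.card ≤ n := by simpa using Finset.card_le_univ c.2.1
      omega
    rw [macaulay, macaulay, hfilt m P, hfilt m' Q]
    simp
end

section
/- Let J = (x_1^{d_1},...,x_{n−r}^{d_{n−r}}) ⊆ S = K[x_1,...,x_n] and F = S e_1 ⊕ ... ⊕ S e_m a graded free module. The Hilbert polynomial of F/JF has degree r − 1; consequently, for any D-exact cone decomposition P of N_{JF}, the Macaulay constants satisfy b_{n+1} = b_n = ... = b_{r+1} = D. -/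
open MvPolynomial

noncomputable section
variable (K : Type*) [Field K]

/-- `N_M`: the `K`-span of the monomials of `F` not lying in the monomial submodule `M`. -/
def monComplement {n m : ℕ} (M : Submodule (MvPolynomial (Fin n) K) (FreeMod K n m)) :
    Submodule K (FreeMod K n m) :=
  Submodule.span K { f | ∃ p : Fin m × (Fin n →₀ ℕ), f = mval K p ∧ mval K p ∉ M }

/-- `JF` for `J = (x₁^{d₁},…,x_{n−r}^{d_{n−r}})`. -/
def purePowersF (n m r : ℕ) (d : Fin n → ℕ) :
    Submodule (MvPolynomial (Fin n) K) (FreeMod K n m) :=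
  Submodule.span (MvPolynomial (Fin n) K)
    { f | ∃ (i : Fin n) (j : Fin m), (i : ℕ) < n - r ∧
        f = Pi.single j ((MvPolynomial.X i : MvPolynomial (Fin n) K) ^ d i) }

end

noncomputable section
/-! ### Auxiliary development -/

namespace Stmt10Aux

open Finset

section Basics

variable {K : Type*} [Field K] {n m : ℕ}

/-- Coefficient functional. -/
def phi (q : Fin m × (Fin n →₀ ℕ)) : FreeMod K n m →ₗ[K] K where
  toFun f := (f q.1).coeff q.2
  map_add' f g := by simp
  map_smul' c f := by simp

lemma phi_apply (q : Fin m × (Fin n →₀ ℕ)) (f : FreeMod K n m) :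
    phi q f = (f q.1).coeff q.2 := rfl

lemma mval_apply (p : Fin m × (Fin n →₀ ℕ)) (j : Fin m) :
    mval K p j = if p.1 = j then MvPolynomial.monomial p.2 (1 : K) else 0 := by
  simp [mval, Pi.single_apply, eq_comm]

lemma phi_mval (p q : Fin m × (Fin n →₀ ℕ)) :
    phi q (mval K p) = if p = q then (1 : K) else 0 := by
  rw [phi_apply, mval_apply]
  by_cases h1 : p.1 = q.1
  · rw [if_pos h1, MvPolynomial.coeff_monomial]
    by_cases h2 : p.2 = q.2
    · rw [if_pos h2, if_pos (Prod.ext h1 h2)]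
    · rw [if_neg h2, if_neg (by simp [Prod.ext_iff, h2])]
  · rw [if_neg h1, if_neg (by simp [Prod.ext_iff, h1])]
    exact MvPolynomial.coeff_zero _

lemma mem_suppM {f : FreeMod K n m} {q : Fin m × (Fin n →₀ ℕ)} :
    q ∈ suppM K f ↔ phi q f ≠ 0 := by
  obtain ⟨j, b⟩ := q
  simp [suppM, phi_apply, Prod.ext_iff, MvPolynomial.mem_support_iff]

lemma phi_eq_zero_of_mem_span {S : Set (Fin m × (Fin n →₀ ℕ))} {f : FreeMod K n m}
    (hf : f ∈ Submodule.span K (mval K '' S)) {q : Fin m × (Fin n →₀ ℕ)} (hq : q ∉ S) :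
    phi q f = 0 := by
  induction hf using Submodule.span_induction with
  | mem x hx =>
    obtain ⟨p, hp, rfl⟩ := hx
    rw [phi_mval, if_neg]
    rintro rfl; exact hq hp
  | zero => simp
  | add x y _ _ hx hy => rw [map_add, hx, hy, add_zero]
  | smul c x _ hx => rw [map_smul, hx, smul_zero]

lemma suppM_subset_of_mem_span {S : Set (Fin m × (Fin n →₀ ℕ))} {f : FreeMod K n m}
    (hf : f ∈ Submodule.span K (mval K '' S)) {q : Fin m × (Fin n →₀ ℕ)}
    (hq : q ∈ suppM K f) : q ∈ S := by
  by_contra h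
  exact (mem_suppM.mp hq) (phi_eq_zero_of_mem_span hf h)

lemma ext_phi {f g : FreeMod K n m} (h : ∀ q, phi q f = phi q g) : f = g := by
  funext j
  apply MvPolynomial.ext
  intro b
  exact h (j, b)

lemma eq_sum_suppM (f : FreeMod K n m) :
    f = ∑ p ∈ suppM K f, phi p f • mval K p := by
  apply ext_phi
  intro q
  rw [map_sum]
  simp only [map_smul, phi_mval, smul_eq_mul, mul_ite, mul_one, mul_zero]
  rw [Finset.sum_ite_eq' (suppM K f) q (fun p => phi p f)]
  by_cases h : q ∈ suppM K f
  · rw [if_pos h]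
  · rw [if_neg h]
    have h0 : phi q f = 0 := by
      by_contra hc
      exact h (mem_suppM.mpr hc)
    exact h0

lemma mem_span_suppM {f : FreeMod K n m} {S : Set (Fin m × (Fin n →₀ ℕ))}
    (hS : ∀ q ∈ suppM K f, q ∈ S) :
    f ∈ Submodule.span K (mval K '' S) := by
  have h := eq_sum_suppM (K := K) f
  rw [h]
  refine Submodule.sum_mem _ fun p hp => Submodule.smul_mem _ _ ?_
  exact Submodule.subset_span ⟨p, hS p hp, rfl⟩

lemma degComp_eq (e : Fin m → ℕ) (z : ℕ) :
    degComp K n m e z = Submodule.span K (mval K '' {p | mdeg e p = z}) := by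
  unfold degComp
  congr 1
  ext f
  constructor
  · rintro ⟨p, hp, rfl⟩; exact ⟨p, hp, rfl⟩
  · rintro ⟨p, hp, rfl⟩; exact ⟨p, hp, rfl⟩

lemma monComplement_eq (M : Submodule (MvPolynomial (Fin n) K) (FreeMod K n m)) :
    monComplement K M = Submodule.span K (mval K '' {p | mval K p ∉ M}) := by
  unfold monComplement
  congr 1
  ext f
  constructor
  · rintro ⟨p, rfl, hp⟩; exact ⟨p, hp, rfl⟩
  · rintro ⟨p, hp, rfl⟩; exact ⟨p, rfl, hp⟩

lemma mval_mem_degComp {e : Fin m → ℕ} {z : ℕ} {p : Fin m × (Fin n →₀ ℕ)}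
    (hp : mdeg e p = z) : mval K p ∈ degComp K n m e z :=
  Submodule.subset_span ⟨p, hp, rfl⟩

lemma mdeg_eq (e : Fin m → ℕ) (p : Fin m × (Fin n →₀ ℕ)) :
    mdeg e p = (∑ i, p.2 i) + e p.1 := by
  unfold mdeg
  rw [Finsupp.sum_fintype]
  intro i; rfl

lemma finite_of_bounded (S : Set (Fin m × (Fin n →₀ ℕ))) (C : ℕ)
    (hS : ∀ p ∈ S, ∀ i, p.2 i ≤ C) : S.Finite := by
  rw [← Set.finite_coe_iff]
  have hinj : Function.Injective (fun x : S =>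
      ((x.1.1, fun i => (⟨x.1.2 i, Nat.lt_succ_of_le (hS x.1 x.2 i)⟩ : Fin (C + 1))) :
        Fin m × (Fin n → Fin (C + 1)))) := by
    rintro ⟨⟨j, a⟩, ha⟩ ⟨⟨j', a'⟩, ha'⟩ h
    simp only [Prod.mk.injEq] at h
    obtain ⟨h1, h2⟩ := h
    refine Subtype.ext (Prod.ext h1 (Finsupp.ext fun i => ?_))
    exact congrArg Fin.val (congrFun h2 i)
  exact Finite.of_injective _ hinj

lemma coord_le_of_mdeg {e : Fin m → ℕ} {z : ℕ} {p : Fin m × (Fin n →₀ ℕ)}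
    (hp : mdeg e p = z) (i : Fin n) : p.2 i ≤ z := by
  rw [mdeg_eq] at hp
  have : p.2 i ≤ ∑ i', p.2 i' := Finset.single_le_sum (fun _ _ => Nat.zero_le _) (mem_univ i)
  omega

lemma finite_mdeg (e : Fin m → ℕ) (z : ℕ) : {p : Fin m × (Fin n →₀ ℕ) | mdeg e p = z}.Finite :=
  finite_of_bounded _ z fun p hp i => coord_le_of_mdeg hp i

instance fd_degComp (e : Fin m → ℕ) (z : ℕ) : FiniteDimensional K ↥(degComp K n m e z) := by
  rw [degComp_eq]
  exact FiniteDimensional.span_of_finite K ((finite_mdeg e z).image _)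

lemma li_mval : LinearIndependent K (mval K : Fin m × (Fin n →₀ ℕ) → FreeMod K n m) := by
  rw [linearIndependent_iff']
  intro s g h i hi
  have h2 := congrArg (phi i) h
  rw [map_sum, map_zero] at h2
  simp only [map_smul, phi_mval, smul_eq_mul, mul_ite, mul_one, mul_zero] at h2
  rwa [Finset.sum_ite_eq' s i g, if_pos hi] at h2

end Basics

section Counting

variable {n : ℕ}

/-- `c` is supported inside `u`. -/
def Supported (u : Finset (Fin n)) (c : Fin n →₀ ℕ) : Prop := ∀ i, i ∉ u → c i = 0

lemma supported_iff_subset {u : Finset (Fin n)} {c : Fin n →₀ ℕ} :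
    Supported u c ↔ (↑c.support : Set (Fin n)) ⊆ (↑u : Set (Fin n)) := by
  constructor
  · intro h i hi
    simp only [Finset.coe_subset, Finset.mem_coe] at *
    by_contra hiu
    exact (Finsupp.mem_support_iff.mp hi) (h i hiu)
  · intro h i hiu
    by_contra hc
    exact hiu (h (Finsupp.mem_support_iff.mpr hc))

lemma finite_comp (u : Finset (Fin n)) (s : ℕ) :
    Finite {c : Fin n →₀ ℕ // Supported u c ∧ ∑ i, c i = s} := by
  have hb : ∀ c : {c : Fin n →₀ ℕ // Supported u c ∧ ∑ i, c i = s}, ∀ i, c.1 i ≤ s := by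
    intro c i
    have h1 : c.1 i ≤ ∑ i', c.1 i' := Finset.single_le_sum (fun _ _ => Nat.zero_le _) (mem_univ i)
    have h2 := c.2.2
    omega
  have hinj : Function.Injective (fun x : {c : Fin n →₀ ℕ // Supported u c ∧ ∑ i, c i = s} =>
      (fun i => (⟨x.1 i, Nat.lt_succ_of_le (hb x i)⟩ : Fin (s + 1)) : Fin n → Fin (s + 1))) := by
    rintro ⟨c, hc⟩ ⟨c', hc'⟩ h
    refine Subtype.ext (Finsupp.ext fun i => ?_)
    exact congrArg Fin.val (congrFun h i)
  exact Finite.of_injective _ hinj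

lemma sum_subtype_eq {u : Finset (Fin n)} {c : Fin n →₀ ℕ} (hc : Supported u c) :
    ∑ x : {x // x ∈ u}, c x.1 = ∑ i, c i := by
  rw [Finset.sum_coe_sort u (fun i => c i)]
  apply Finset.sum_subset (Finset.subset_univ u)
  intro i _ hi
  exact hc i hi

/-- Compositions of `s` supported in `u` biject with `Sym u s`. -/
def compEquiv (u : Finset (Fin n)) (s : ℕ) :
    {c : Fin n →₀ ℕ // Supported u c ∧ ∑ i, c i = s} ≃ Sym {x // x ∈ u} s where
  toFun c := ⟨Finsupp.toMultiset (Finsupp.subtypeDomain (· ∈ u) c.1), by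
    rw [Finsupp.card_toMultiset, Finsupp.sum_fintype _ _ (fun _ => rfl)]
    simp only [Finsupp.subtypeDomain_apply, id]
    rw [sum_subtype_eq c.2.1, c.2.2]⟩
  invFun σ := ⟨Multiset.toFinsupp (σ.1.map Subtype.val), by
    constructor
    · intro i hi
      rw [Multiset.toFinsupp_apply, Multiset.count_eq_zero]
      intro hmem
      obtain ⟨x, _, rfl⟩ := Multiset.mem_map.mp hmem
      exact hi x.2
    · have hcard : (σ.1.map Subtype.val).card = s := by
        rw [Multiset.card_map, σ.2]
      set M := σ.1.map Subtype.val with hM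
      simp only [Multiset.toFinsupp_apply]
      rw [← hcard]
      rw [← Multiset.toFinset_sum_count_eq M]
      symm
      apply Finset.sum_subset (Finset.subset_univ _)
      intro i _ hi
      rwa [Multiset.count_eq_zero, ← Multiset.mem_toFinset]⟩
  left_inv := by
    rintro ⟨c, hc1, hc2⟩
    apply Subtype.ext
    apply Finsupp.ext
    intro i
    simp only [Multiset.toFinsupp_apply]
    by_cases hi : i ∈ u
    · rw [show i = (⟨i, hi⟩ : {x // x ∈ u}).1 from rfl,
        Multiset.count_map_eq_count' _ _ Subtype.val_injective,
        Finsupp.count_toMultiset, Finsupp.subtypeDomain_apply]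
    · rw [Multiset.count_eq_zero.mpr, hc1 i hi]
      intro hmem
      obtain ⟨x, _, hx⟩ := Multiset.mem_map.mp hmem
      exact hi (hx ▸ x.2)
  right_inv := by
    rintro ⟨σ, hσ⟩
    apply Subtype.ext
    rw [Multiset.ext]
    intro x
    rw [Finsupp.count_toMultiset, Finsupp.subtypeDomain_apply, Multiset.toFinsupp_apply,
      Multiset.count_map_eq_count' _ _ Subtype.val_injective]

lemma card_comp (u : Finset (Fin n)) (s : ℕ) :
    Nat.card {c : Fin n →₀ ℕ // Supported u c ∧ ∑ i, c i = s} =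
      (u.card + s - 1).choose s := by
  rw [Nat.card_congr (compEquiv u s), Nat.card_eq_fintype_card, Sym.card_sym_eq_multichoose,
    Nat.multichoose_eq, Fintype.card_coe]

lemma card_filter_lt {k : ℕ} (hk : k ≤ n) :
    (Finset.univ.filter fun i : Fin n => (i : ℕ) < k).card = k := by
  rw [← Fintype.card_subtype]
  have e : {i : Fin n // (i : ℕ) < k} ≃ Fin k :=
    { toFun := fun x => ⟨x.1, x.2⟩
      invFun := fun y => ⟨⟨y.1, y.2.trans_le hk⟩, y.2⟩
      left_inv := fun x => by ext; rfl
      right_inv := fun y => by ext; rfl }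
  rw [Fintype.card_congr e, Fintype.card_fin]

end Counting

section Module

variable {K : Type*} [Field K] {n m : ℕ}

lemma single_smul_pi (q : MvPolynomial (Fin n) K) (j : Fin m) (g : MvPolynomial (Fin n) K) :
    q • (Pi.single j g : FreeMod K n m) = Pi.single j (q * g) := by
  funext j'
  rcases eq_or_ne j' j with rfl | h
  · simp
  · simp [Pi.single_eq_of_ne h]

lemma monomial_smul_mval (δ : Fin n →₀ ℕ) (p : Fin m × (Fin n →₀ ℕ)) :
    (MvPolynomial.monomial δ (1 : K)) • mval K p = mval K (p.1, p.2 + δ) := by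
  unfold mval
  rw [single_smul_pi, MvPolynomial.monomial_mul, one_mul, add_comm]

lemma smul_mem_degComp {e : Fin m → ℕ} {h : FreeMod K n m} {t : ℕ}
    (hh : h ∈ degComp K n m e t) (δ : Fin n →₀ ℕ) :
    (MvPolynomial.monomial δ (1 : K)) • h ∈ degComp K n m e (t + ∑ i, δ i) := by
  rw [degComp_eq] at hh ⊢
  induction hh using Submodule.span_induction with
  | mem x hx =>
    obtain ⟨p, hp, rfl⟩ := hx
    rw [monomial_smul_mval]
    refine Submodule.subset_span ⟨(p.1, p.2 + δ), ?_, rfl⟩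
    simp only [Set.mem_setOf_eq] at hp ⊢
    rw [mdeg_eq] at hp ⊢
    simp only [Finsupp.add_apply, Finset.sum_add_distrib]
    omega
  | zero => simp
  | add x y _ _ hx hy => rw [smul_add]; exact Submodule.add_mem _ hx hy
  | smul c x _ hx =>
    rw [smul_comm]
    exact Submodule.smul_mem _ c hx

lemma poly_eq_zero_of_smul {h : FreeMod K n m} (hh : h ≠ 0) {q : MvPolynomial (Fin n) K}
    (hq : q • h = 0) : q = 0 := by
  obtain ⟨j, hj⟩ : ∃ j, h j ≠ 0 := by
    by_contra hc; push_neg at hc; exact hh (funext hc)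
  have h2 := congrFun hq j
  rw [Pi.smul_apply, smul_eq_mul, Pi.zero_apply] at h2
  rcases mul_eq_zero.mp h2 with h1 | h1
  · exact h1
  · exact absurd h1 hj

lemma li_cone_family {h : FreeMod K n m} (hh : h ≠ 0) {ι : Type*} (δ : ι → Fin n →₀ ℕ)
    (hδ : Function.Injective δ) :
    LinearIndependent K (fun x : ι => (MvPolynomial.monomial (δ x) (1 : K)) • h) := by
  rw [linearIndependent_iff']
  intro s g hsum x hx
  have hpoly : (∑ i ∈ s, g i • MvPolynomial.monomial (δ i) (1 : K)) • h = 0 := by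
    rw [Finset.sum_smul]
    simpa [smul_assoc] using hsum
  have hq := poly_eq_zero_of_smul hh hpoly
  have h2 := congrArg (MvPolynomial.coeff (δ x)) hq
  rw [MvPolynomial.coeff_sum, MvPolynomial.coeff_zero] at h2
  simp only [MvPolynomial.coeff_smul, MvPolynomial.coeff_monomial, smul_eq_mul, mul_ite, mul_one,
    mul_zero] at h2
  rw [Finset.sum_eq_single x (fun i _ hne => by rw [if_neg (fun hc => hne (hδ hc))])
    (fun hxs => absurd hx hxs)] at h2
  rwa [if_pos rfl] at h2

end Module

end Stmt10Aux

namespace Stmt10Aux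

open Finset

section JF

variable {K : Type*} [Field K] {n m r : ℕ} {d : Fin n → ℕ}

lemma mem_JF_of {a : Fin n →₀ ℕ} {i : Fin n} (hi : (i : ℕ) < n - r) (hle : d i ≤ a i)
    (j : Fin m) : mval K (j, a) ∈ purePowersF K n m r d := by
  have hgen : (Pi.single j (MvPolynomial.X i ^ d i) : FreeMod K n m) ∈ purePowersF K n m r d :=
    Submodule.subset_span ⟨i, j, hi, rfl⟩
  have hsm := Submodule.smul_mem _
    (MvPolynomial.monomial (a - Finsupp.single i (d i)) (1 : K)) hgen
  have heq : (MvPolynomial.monomial (a - Finsupp.single i (d i)) (1 : K)) •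
      (Pi.single j (MvPolynomial.X i ^ d i) : FreeMod K n m) = mval K (j, a) := by
    rw [single_smul_pi, MvPolynomial.X_pow_eq_monomial, MvPolynomial.monomial_mul, one_mul,
      tsub_add_cancel_of_le (Finsupp.single_le_iff.mpr hle)]
    rfl
  rwa [heq] at hsm

lemma not_mem_JF {a : Fin n →₀ ℕ} (h : ∀ i : Fin n, (i : ℕ) < n - r → a i < d i)
    (j : Fin m) : mval K (j, a) ∉ purePowersF K n m r d := by
  intro hmem
  have key : ∀ f ∈ purePowersF K n m r d, ∀ (j' : Fin m) (b : Fin n →₀ ℕ),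
      (f j').coeff b ≠ 0 → ∃ i : Fin n, (i : ℕ) < n - r ∧ d i ≤ b i := by
    intro f hf
    induction hf using Submodule.span_induction with
    | mem x hx =>
      obtain ⟨i, j0, hi, rfl⟩ := hx
      intro j' b hb
      rcases eq_or_ne j' j0 with rfl | hne
      · rw [Pi.single_eq_same, MvPolynomial.coeff_X_pow] at hb
        refine ⟨i, hi, ?_⟩
        have hsingle : Finsupp.single i (d i) = b := by
          by_contra hc
          exact hb (if_neg hc)
        rw [← hsingle, Finsupp.single_eq_same]
      · rw [Pi.single_eq_of_ne hne] at hb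
        simp at hb
    | zero => intro j' b hb; simp at hb
    | add x y _ _ hx hy =>
      intro j' b hb
      rw [Pi.add_apply, MvPolynomial.coeff_add] at hb
      by_cases h1 : (x j').coeff b = 0
      · exact hy j' b (by rw [h1, zero_add] at hb; exact hb)
      · exact hx j' b h1
    | smul q x _ hx =>
      intro j' b hb
      rw [Pi.smul_apply, smul_eq_mul, MvPolynomial.coeff_mul] at hb
      obtain ⟨⟨u, v⟩, huv, hne⟩ := Finset.exists_ne_zero_of_sum_ne_zero hb
      have hv : (x j').coeff v ≠ 0 := by
        intro hc
        rw [hc, mul_zero] at hne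
        exact hne rfl
      obtain ⟨i, hi, hdi⟩ := hx j' v hv
      refine ⟨i, hi, hdi.trans ?_⟩
      have hsum : u + v = b := Finset.HasAntidiagonal.mem_antidiagonal.mp huv
      calc v i ≤ u i + v i := Nat.le_add_left _ _
        _ = b i := by rw [← hsum]; rfl
  obtain ⟨i, hi, hdi⟩ := key _ hmem j a (by
    rw [show (mval K (j, a) j) = MvPolynomial.monomial a (1 : K) by
      unfold mval; exact Pi.single_eq_same _ _]
    rw [MvPolynomial.coeff_monomial, if_pos rfl]
    exact one_ne_zero)
  exact absurd (h i hi) (by omega)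

end JF

section Decomp

variable {n m : ℕ} (r : ℕ) (d : Fin n → ℕ) (e : Fin m → ℕ)

/-- The set of allowed monomial positions of degree `z`. -/
def allowedSet (z : ℕ) : Set (Fin m × (Fin n →₀ ℕ)) :=
  {p | mdeg e p = z ∧ ∀ i : Fin n, (i : ℕ) < n - r → p.2 i < d i}

/-- The "box": monomials supported on the low variables with bounded exponents. -/
def BoxSet : Set (Fin m × (Fin n →₀ ℕ)) :=
  {p | (∀ i : Fin n, ¬ ((i : ℕ) < n - r) → p.2 i = 0) ∧
    ∀ i : Fin n, (i : ℕ) < n - r → p.2 i < d i}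

/-- Bound beyond which the Hilbert function is polynomial. -/
def N0 : ℕ :=
  (∑ i ∈ Finset.univ.filter (fun i : Fin n => (i : ℕ) < n - r), (d i - 1)) +
    (Finset.univ.sup e) + 1

lemma finite_box : (BoxSet r d : Set (Fin m × (Fin n →₀ ℕ))).Finite := by
  apply finite_of_bounded _ (Finset.univ.sup d)
  rintro p ⟨hp1, hp2⟩ i
  by_cases hi : (i : ℕ) < n - r
  · exact (hp2 i hi).le.trans (Finset.le_sup (mem_univ i))
  · rw [hp1 i hi]; exact Nat.zero_le _

lemma box_mdeg_lt {p : Fin m × (Fin n →₀ ℕ)} (hp : p ∈ BoxSet (n := n) (m := m) r d) :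
    mdeg e p < N0 r d e := by
  obtain ⟨hp1, hp2⟩ := hp
  rw [mdeg_eq]
  have h1 : ∑ i, p.2 i = ∑ i ∈ Finset.univ.filter (fun i : Fin n => (i : ℕ) < n - r), p.2 i := by
    symm
    apply Finset.sum_subset (Finset.filter_subset _ _)
    intro i _ hi
    simp only [Finset.mem_filter, Finset.mem_univ, true_and] at hi
    exact hp1 i hi
  have h2 : ∑ i ∈ Finset.univ.filter (fun i : Fin n => (i : ℕ) < n - r), p.2 i ≤
      ∑ i ∈ Finset.univ.filter (fun i : Fin n => (i : ℕ) < n - r), (d i - 1) := by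
    apply Finset.sum_le_sum
    intro i hi
    simp only [Finset.mem_filter, Finset.mem_univ, true_and] at hi
    have := hp2 i hi
    omega
  have h3 : e p.1 ≤ Finset.univ.sup e := Finset.le_sup (mem_univ p.1)
  unfold N0
  omega

lemma finite_allowed (z : ℕ) : (allowedSet r d e z).Finite :=
  (finite_mdeg e z).subset fun p hp => hp.1

/-- Decomposition of the allowed monomials of degree `z`. -/
def allowedEquiv (z : ℕ) (hz : ∀ p ∈ BoxSet (n := n) (m := m) r d, mdeg e p ≤ z) :
    allowedSet r d e z ≃
      Σ x : BoxSet (n := n) (m := m) r d,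
        {c : Fin n →₀ ℕ //
          Supported (Finset.univ.filter fun i : Fin n => ¬ ((i : ℕ) < n - r)) c ∧
          ∑ i, c i = z - mdeg e x.1} where
  toFun a :=
    ⟨⟨(a.1.1, a.1.2.filter (fun i : Fin n => (i : ℕ) < n - r)), by
      constructor
      · intro i hi
        rw [Finsupp.filter_apply, if_neg hi]
      · intro i hi
        rw [Finsupp.filter_apply, if_pos hi]
        exact a.2.2 i hi⟩,
    ⟨a.1.2.filter (fun i : Fin n => ¬ ((i : ℕ) < n - r)), by
      constructor
      · intro i hi
        simp only [Finset.mem_filter, Finset.mem_univ, true_and, not_not] at hi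
        rw [Finsupp.filter_apply, if_neg (not_not_intro hi)]
      · have hsplit : ∑ i, a.1.2 i =
            (∑ i, (a.1.2.filter (fun i : Fin n => (i : ℕ) < n - r)) i) +
            ∑ i, (a.1.2.filter (fun i : Fin n => ¬ ((i : ℕ) < n - r))) i := by
          rw [← Finset.sum_add_distrib]
          apply Finset.sum_congr rfl
          intro i _
          rw [Finsupp.filter_apply, Finsupp.filter_apply]
          by_cases hi : (i : ℕ) < n - r
          · rw [if_pos hi, if_neg (not_not_intro hi), add_zero]
          · rw [if_neg hi, if_pos hi, zero_add]
        have hdeg := a.2.1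
        rw [mdeg_eq] at hdeg
        rw [mdeg_eq]
        simp only at hsplit hdeg ⊢
        omega⟩⟩
  invFun y :=
    ⟨(y.1.1.1, y.1.1.2 + y.2.1), by
      constructor
      · obtain ⟨x, cc⟩ := y
        obtain ⟨c, hc1, hc2⟩ := cc
        have hb := hz x.1 x.2
        rw [mdeg_eq] at hb hc2
        rw [mdeg_eq]
        show (∑ i, (x.1.2 + c) i) + e x.1.1 = z
        simp only [Finsupp.add_apply, Finset.sum_add_distrib]
        omega
      · intro i hi
        have hc0 : y.2.1 i = 0 := by
          apply y.2.2.1 i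
          simp only [Finset.mem_filter, Finset.mem_univ, true_and, not_not]
          exact hi
        rw [Finsupp.add_apply, hc0, add_zero]
        exact y.1.2.2 i hi⟩
  left_inv := by
    rintro ⟨⟨j, a⟩, ha⟩
    apply Subtype.ext
    refine Prod.ext rfl ?_
    apply Finsupp.ext
    intro i
    simp only [Finsupp.add_apply, Finsupp.filter_apply]
    by_cases hi : (i : ℕ) < n - r
    · rw [if_pos hi, if_neg (not_not_intro hi), add_zero]
    · rw [if_neg hi, if_pos hi, zero_add]
  right_inv := by
    rintro ⟨⟨⟨j, b⟩, hb⟩, ⟨c, hc⟩⟩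
    refine Sigma.subtype_ext (Subtype.ext (Prod.ext rfl ?_)) ?_
    · apply Finsupp.ext
      intro i
      rw [Finsupp.filter_apply]
      by_cases hi : (i : ℕ) < n - r
      · rw [if_pos hi, Finsupp.add_apply]
        have hc0 : c i = 0 := by
          apply hc.1 i
          simp only [Finset.mem_filter, Finset.mem_univ, true_and, not_not]
          exact hi
        rw [hc0, add_zero]
      · rw [if_neg hi]
        exact (hb.1 i hi).symm
    · apply Finsupp.ext
      intro i
      rw [Finsupp.filter_apply]
      by_cases hi : (i : ℕ) < n - r
      · rw [if_neg (not_not_intro hi)]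
        symm
        apply hc.1 i
        simp only [Finset.mem_filter, Finset.mem_univ, true_and, not_not]
        exact hi
      · rw [if_pos hi, Finsupp.add_apply, hb.1 i hi, zero_add]

end Decomp

section Arith

/-- monotonicity of `choose` in the lower index below the half. -/
lemma choose_mono_left {N i j : ℕ} (hij : i ≤ j) : j ≤ N / 2 → N.choose i ≤ N.choose j := by
  induction j, hij using Nat.le_induction with
  | base => intro _; exact le_rfl
  | succ jj hjj ih =>
    intro hj
    exact (ih (by omega)).trans (Nat.choose_le_succ_of_lt_half_left (by omega))

lemma sum_choose_le (t R : ℕ) : ∑ j ∈ Finset.range R, t.choose j ≤ 2 ^ t := by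
  rcases le_or_gt R (t + 1) with h | h
  · calc ∑ j ∈ Finset.range R, t.choose j ≤ ∑ j ∈ Finset.range (t + 1), t.choose j :=
        Finset.sum_le_sum_of_subset (Finset.range_subset_range.mpr h)
      _ = 2 ^ t := Nat.sum_range_choose t
  · have heq : ∑ j ∈ Finset.range R, t.choose j = ∑ j ∈ Finset.range (t + 1), t.choose j := by
      symm
      apply Finset.sum_subset (Finset.range_subset_range.mpr h.le)
      intro j _ hj
      simp only [Finset.mem_range, not_lt] at hj
      exact Nat.choose_eq_zero_of_lt (by omega)
    rw [heq, Nat.sum_range_choose]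

lemma key_ineq (M t : ℕ) {r s : ℕ} (hr : 1 ≤ r) (hslb : r * M * 2 ^ t + r < s) :
    M * ((t + s) + r - 1).choose (r - 1) < (s + r).choose r := by
  have hsr : r ≤ s := le_trans (Nat.le_add_left r (r * M * 2 ^ t)) hslb.le
  set B := (s + r - 1).choose (r - 1) with hB
  have hBpos : 0 < B := Nat.choose_pos (by omega)
  have hvdm : ((s + r - 1) + t).choose (r - 1) ≤ 2 ^ t * B := by
    rw [Nat.add_choose_eq]
    calc ∑ ij ∈ Finset.HasAntidiagonal.antidiagonal (r - 1), (s + r - 1).choose ij.1 * t.choose ij.2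
        ≤ ∑ ij ∈ Finset.HasAntidiagonal.antidiagonal (r - 1), B * t.choose ij.2 := by
          apply Finset.sum_le_sum
          rintro ⟨i, j⟩ hij
          have hmem : i + j = r - 1 := Finset.HasAntidiagonal.mem_antidiagonal.mp hij
          have hle : (s + r - 1).choose i ≤ B := choose_mono_left (by omega)
            (by rw [Nat.le_div_iff_mul_le two_pos]; omega)
          exact Nat.mul_le_mul_right _ hle
      _ = B * ∑ ij ∈ Finset.HasAntidiagonal.antidiagonal (r - 1), t.choose ij.2 := by
          rw [Finset.mul_sum]
      _ ≤ B * 2 ^ t := by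
          apply Nat.mul_le_mul_left
          rw [Finset.Nat.sum_antidiagonal_eq_sum_range_succ_mk]
          have hrefl : ∑ k ∈ Finset.range (r - 1).succ, t.choose (r - 1 - k)
              = ∑ k ∈ Finset.range (r - 1).succ, t.choose k := by
            have hrr := Finset.sum_range_reflect (fun k => t.choose k) ((r - 1).succ)
            simpa using hrr
          rw [hrefl]
          exact sum_choose_le t _
      _ = 2 ^ t * B := mul_comm _ _
  have hid : (s + r) * B = ((s + r).choose r) * r := by
    have h1 := Nat.add_one_mul_choose_eq (s + r - 1) (r - 1)
    have h2 : s + r - 1 + 1 = s + r := by omega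
    have h3 : r - 1 + 1 = r := by omega
    rw [h2, h3] at h1
    exact h1
  have hmain : r * (M * (((s + r - 1) + t).choose (r - 1))) < r * ((s + r).choose r) := by
    calc r * (M * (((s + r - 1) + t).choose (r - 1)))
        ≤ r * (M * (2 ^ t * B)) :=
          Nat.mul_le_mul_left _ (Nat.mul_le_mul_left _ hvdm)
      _ = (r * M * 2 ^ t) * B := by ring
      _ < (s + r) * B := (Nat.mul_lt_mul_right hBpos).mpr (by omega)
      _ = ((s + r).choose r) * r := hid
      _ = r * ((s + r).choose r) := mul_comm _ _
  have hfin := Nat.lt_of_mul_lt_mul_left hmain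
  have harg : (t + s) + r - 1 = (s + r - 1) + t := by omega
  rw [harg]
  exact hfin

end Arith

end Stmt10Aux

namespace Stmt10Aux

open Finset

section Hilb

variable {K : Type*} [Field K] {n m : ℕ} (r : ℕ) (d : Fin n → ℕ) (e : Fin m → ℕ)

lemma inf_eq_span_allowed (z : ℕ) :
    monComplement K (purePowersF K n m r d) ⊓ degComp K n m e z =
      Submodule.span K (mval K '' allowedSet r d e z) := by
  apply le_antisymm
  · rintro f ⟨hfN, hfD⟩
    rw [monComplement_eq] at hfN
    rw [degComp_eq] at hfD
    apply mem_span_suppM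
    intro q hq
    have h1 : mval K q ∉ purePowersF K n m r d := suppM_subset_of_mem_span hfN hq
    have h2 : mdeg e q = z := suppM_subset_of_mem_span hfD hq
    refine ⟨h2, fun i hi => ?_⟩
    by_contra hc
    exact h1 (mem_JF_of hi (by omega) q.1)
  · rw [Submodule.span_le]
    rintro f ⟨p, ⟨hp1, hp2⟩, rfl⟩
    refine ⟨?_, mval_mem_degComp hp1⟩
    rw [monComplement_eq]
    exact Submodule.subset_span ⟨p, not_mem_JF hp2 p.1, rfl⟩

lemma hilb_eq_card (z : ℕ) :
    hilb K e (monComplement K (purePowersF K n m r d)) z =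
      Nat.card (allowedSet r d e z) := by
  unfold hilb
  rw [inf_eq_span_allowed]
  haveI : Finite ↥(allowedSet r d e z) := (finite_allowed r d e z).to_subtype
  letI : Fintype ↥(allowedSet r d e z) := Fintype.ofFinite _
  rw [Set.image_eq_range]
  have hli : LinearIndependent K (fun x : allowedSet r d e z => mval K x.1) :=
    li_mval.comp Subtype.val Subtype.val_injective
  rw [finrank_span_eq_card hli, Nat.card_eq_fintype_card]

instance finite_comp' (u : Finset (Fin n)) (s : ℕ) :
    Finite {c : Fin n →₀ ℕ // Supported u c ∧ ∑ i, c i = s} := finite_comp u s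

lemma hilb_formula [Fintype ↥(BoxSet (n := n) (m := m) r d)] {z : ℕ}
    (hz : ∀ p ∈ BoxSet (n := n) (m := m) r d, mdeg e p ≤ z) :
    hilb K e (monComplement K (purePowersF K n m r d)) z =
      ∑ x : ↥(BoxSet (n := n) (m := m) r d),
        ((Finset.univ.filter fun i : Fin n => ¬ ((i : ℕ) < n - r)).card +
          (z - mdeg e x.1) - 1).choose (z - mdeg e x.1) := by
  rw [hilb_eq_card, Nat.card_congr (allowedEquiv r d e z hz)]
  letI : ∀ x : ↥(BoxSet (n := n) (m := m) r d),
      Fintype {c : Fin n →₀ ℕ //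
        Supported (Finset.univ.filter fun i : Fin n => ¬ ((i : ℕ) < n - r)) c ∧
        ∑ i, c i = z - mdeg e x.1} := fun x => @Fintype.ofFinite _ (finite_comp _ _)
  rw [Nat.card_eq_fintype_card, Fintype.card_sigma]
  apply Finset.sum_congr rfl
  intro x _
  rw [← Nat.card_eq_fintype_card, card_comp]

lemma hilb_lower {h : FreeMod K n m} (hne : h ≠ 0) {t : ℕ} (hht : h ∈ degComp K n m e t)
    {u : Finset (Fin n)}
    (hcone : cone K h (↑u : Set (Fin n)) ≤ monComplement K (purePowersF K n m r d)) (s : ℕ) :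
    (u.card + s - 1).choose s ≤
      hilb K e (monComplement K (purePowersF K n m r d)) (t + s) := by
  classical
  letI : Fintype {c : Fin n →₀ ℕ // Supported u c ∧ ∑ i, c i = s} := Fintype.ofFinite _
  have hli : LinearIndependent K (fun x : {c : Fin n →₀ ℕ // Supported u c ∧ ∑ i, c i = s} =>
      (MvPolynomial.monomial x.1 (1 : K)) • h) :=
    li_cone_family hne _ (fun x y hxy => Subtype.ext hxy)
  have hsub : Submodule.span K (Set.range (fun x : {c : Fin n →₀ ℕ //
        Supported u c ∧ ∑ i, c i = s} => (MvPolynomial.monomial x.1 (1 : K)) • h)) ≤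
      monComplement K (purePowersF K n m r d) ⊓ degComp K n m e (t + s) := by
    rw [Submodule.span_le]
    rintro f ⟨x, rfl⟩
    constructor
    · apply hcone
      exact Submodule.subset_span ⟨x.1, supported_iff_subset.mp x.2.1, rfl⟩
    · have hmem := smul_mem_degComp hht x.1
      rwa [x.2.2] at hmem
  have h1 := finrank_span_eq_card hli
  haveI : FiniteDimensional K
      ↥(monComplement K (purePowersF K n m r d) ⊓ degComp K n m e (t + s)) :=
    Submodule.finiteDimensional_of_le inf_le_right
  have h2 := Submodule.finrank_mono hsub
  rw [h1] at h2
  rw [← Nat.card_eq_fintype_card, card_comp] at h2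
  exact h2

end Hilb

end Stmt10Aux

end

open Stmt10Aux

/-- For `J = (x₁^{d₁},…,x_{n−r}^{d_{n−r}})`, the Hilbert polynomial of
`F/JF` (equivalently of `N_{JF}`) has degree `r − 1`; consequently for any `D`-exact cone
decomposition `P` of `N_{JF}`, `b_{n+1} = b_n = ⋯ = b_{r+1} = D`. -/
theorem stmt_10 (K : Type*) [Field K] (n m r D : ℕ) (hm : 0 < m) (hr : r ≤ n)
    (e : Fin m → ℕ) (d : Fin n → ℕ) (hd : ∀ i : Fin n, (i : ℕ) < n - r → 1 ≤ d i)
    (P : Finset (ConeData K n m))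
    (hdec : IsConeDecomp K e P (monComplement K (purePowersF K n m r d)))
    (hex : IsExact K D P) :
    (∃ p : Polynomial ℚ,
      (∃ N : ℕ, ∀ z : ℕ, N ≤ z →
        (hilb K e (monComplement K (purePowersF K n m r d)) z : ℚ) = p.eval (z : ℚ)) ∧
      (r = 0 → p = 0) ∧ (1 ≤ r → p ≠ 0 ∧ p.natDegree = r - 1)) ∧
    (∀ k : ℕ, r + 1 ≤ k → k ≤ n + 1 → macaulay K D P k = D) := by
  classical
  haveI : Finite ↥(BoxSet (n := n) (m := m) r d) := (finite_box r d).to_subtype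
  letI : Fintype ↥(BoxSet (n := n) (m := m) r d) := Fintype.ofFinite _
  -- the cardinality of the "high" variable set is r
  have hcardhi : (Finset.univ.filter fun i : Fin n => ¬ ((i : ℕ) < n - r)).card = r := by
    have hlow := card_filter_lt (n := n) (Nat.sub_le n r)
    have hsplit := Finset.card_filter_add_card_filter_not
      (s := (Finset.univ : Finset (Fin n))) (p := fun i : Fin n => (i : ℕ) < n - r)
    rw [Finset.card_univ, Fintype.card_fin] at hsplit
    omega
  -- box is nonempty
  have hbox0 : (((⟨0, hm⟩ : Fin m), (0 : Fin n →₀ ℕ)) : Fin m × (Fin n →₀ ℕ)) ∈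
      BoxSet (n := n) (m := m) r d :=
    ⟨fun i _ => rfl, fun i hi => hd i hi⟩
  have hcardbox : 0 < Fintype.card ↥(BoxSet (n := n) (m := m) r d) :=
    Fintype.card_pos_iff.mpr ⟨⟨_, hbox0⟩⟩
  -- empty allowed set in the r = 0 case
  have hr0case : r = 0 → ∀ z : ℕ, N0 r d e ≤ z →
      hilb K e (monComplement K (purePowersF K n m r d)) z = 0 := by
    intro hr0 z hz
    rw [hilb_eq_card]
    have hempty : allowedSet r d e z = ∅ := by
      ext p
      simp only [Set.mem_empty_iff_false, iff_false]
      rintro ⟨hp1, hp2⟩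
      have hbox : p ∈ BoxSet (n := n) (m := m) r d := by
        refine ⟨fun i hi => absurd ?_ hi, hp2⟩
        have := i.isLt
        omega
      have := box_mdeg_lt r d e hbox
      omega
    rw [hempty]
    simp
  constructor
  · -- Part 1: the Hilbert polynomial
    rcases Nat.eq_zero_or_pos r with hr0 | hrpos
    · refine ⟨0, ⟨N0 r d e, fun z hz => ?_⟩, fun _ => rfl, fun h1 => absurd h1 (by omega)⟩
      rw [Polynomial.eval_zero, hr0case hr0 z hz]
      norm_num
    · -- r ≥ 1
      set Q : Polynomial ℚ := ∑ x : ↥(BoxSet (n := n) (m := m) r d),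
        (ascPochhammer ℚ (r - 1)).comp (Polynomial.X + Polynomial.C (1 - (mdeg e x.1 : ℚ)))
        with hQ
      have hmon : ∀ x : ↥(BoxSet (n := n) (m := m) r d),
          ((ascPochhammer ℚ (r - 1)).comp
            (Polynomial.X + Polynomial.C (1 - (mdeg e x.1 : ℚ)))).Monic :=
        fun x => (monic_ascPochhammer ℚ (r - 1)).comp_X_add_C _
      have hdeg : ∀ x : ↥(BoxSet (n := n) (m := m) r d),
          ((ascPochhammer ℚ (r - 1)).comp
            (Polynomial.X + Polynomial.C (1 - (mdeg e x.1 : ℚ)))).natDegree = r - 1 :=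
        fun x => by
          rw [Polynomial.natDegree_comp, ascPochhammer_natDegree, Polynomial.natDegree_X_add_C,
            mul_one]
      have hcoeffQ : Q.coeff (r - 1) =
          (Fintype.card ↥(BoxSet (n := n) (m := m) r d) : ℚ) := by
        rw [hQ, Polynomial.finset_sum_coeff]
        have hterm : ∀ x : ↥(BoxSet (n := n) (m := m) r d),
            ((ascPochhammer ℚ (r - 1)).comp
              (Polynomial.X + Polynomial.C (1 - (mdeg e x.1 : ℚ)))).coeff (r - 1) = 1 := by
          intro x
          have h1 := (hmon x).coeff_natDegree
          rwa [hdeg x] at h1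
        rw [Finset.sum_congr rfl (fun x _ => hterm x)]
        simp [Finset.card_univ]
      have hQne : Q ≠ 0 := by
        intro hc
        rw [hc, Polynomial.coeff_zero] at hcoeffQ
        exact absurd hcoeffQ.symm (by positivity)
      have hQdeg : Q.natDegree = r - 1 := by
        refine le_antisymm (Polynomial.natDegree_sum_le_of_forall_le _ _
          (fun x _ => le_of_eq (hdeg x))) ?_
        apply Polynomial.le_natDegree_of_ne_zero
        rw [hcoeffQ]
        positivity
      have hfne : ((r - 1).factorial : ℚ) ≠ 0 := by
        exact_mod_cast (Nat.factorial_pos (r - 1)).ne'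
      refine ⟨Polynomial.C (((r - 1).factorial : ℚ))⁻¹ * Q, ⟨N0 r d e, fun z hz => ?_⟩,
        fun h0 => absurd h0 (by omega), fun _ => ⟨?_, ?_⟩⟩
      · -- eventual equality
        have hzb : ∀ p ∈ BoxSet (n := n) (m := m) r d, mdeg e p ≤ z :=
          fun p hp => le_trans (box_mdeg_lt r d e hp).le hz
        rw [hilb_formula r d e hzb]
        rw [Polynomial.eval_mul, Polynomial.eval_C, hQ, Polynomial.eval_finset_sum]
        have hterm : ∀ x : ↥(BoxSet (n := n) (m := m) r d),
            Polynomial.eval (z : ℚ) ((ascPochhammer ℚ (r - 1)).comp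
              (Polynomial.X + Polynomial.C (1 - (mdeg e x.1 : ℚ)))) =
            ((r - 1).factorial : ℚ) *
              (((Finset.univ.filter fun i : Fin n => ¬ ((i : ℕ) < n - r)).card +
                (z - mdeg e x.1) - 1).choose (z - mdeg e x.1) : ℚ) := by
          intro x
          have haz : mdeg e x.1 ≤ z := hzb x.1 x.2
          rw [Polynomial.eval_comp, Polynomial.eval_add, Polynomial.eval_X, Polynomial.eval_C]
          have harg : (z : ℚ) + (1 - (mdeg e x.1 : ℚ)) = (((z - mdeg e x.1) + 1 : ℕ) : ℚ) := by
            push_cast [Nat.cast_sub haz]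
            ring
          rw [harg, ← ascPochhammer_eval_cast, ascPochhammer_nat_eq_ascFactorial,
            Nat.ascFactorial_eq_factorial_mul_choose]
          have hchoose : ((z - mdeg e x.1) + (r - 1)).choose (r - 1) =
              ((Finset.univ.filter fun i : Fin n => ¬ ((i : ℕ) < n - r)).card +
                (z - mdeg e x.1) - 1).choose (z - mdeg e x.1) := by
            rw [hcardhi]
            have h2 : (z - mdeg e x.1) ≤ r + (z - mdeg e x.1) - 1 := by omega
            have h3 := Nat.choose_symm h2
            rw [show r + (z - mdeg e x.1) - 1 - (z - mdeg e x.1) = r - 1 by omega] at h3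
            rw [show (z - mdeg e x.1) + (r - 1) = r + (z - mdeg e x.1) - 1 by omega]
            exact h3
          rw [hchoose]
          push_cast
          ring
        rw [Finset.sum_congr rfl (fun x _ => hterm x)]
        rw [Finset.mul_sum]
        push_cast
        apply Finset.sum_congr rfl
        intro x _
        rw [← mul_assoc, inv_mul_cancel₀ hfne, one_mul]
      · exact mul_ne_zero (Polynomial.C_ne_zero.mpr (inv_ne_zero hfne)) hQne
      · rw [Polynomial.natDegree_C_mul (inv_ne_zero hfne), hQdeg]
  · -- Part 2: Macaulay constants
    intro k hk1 hk2
    have main : ∀ c ∈ P, ¬ (k ≤ c.2.1.card) := by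
      rintro c hc hcard
      have hcard' : r + 1 ≤ c.2.1.card := le_trans hk1 hcard
      obtain ⟨hne, hdg⟩ := hdec.1 c hc
      have hconele : cone K c.1 (↑c.2.1 : Set (Fin n)) ≤
          monComplement K (purePowersF K n m r d) := by
        rw [← hdec.2.2]
        exact le_iSup (fun c : ↥P => cone K c.1.1 (↑c.1.2.1 : Set (Fin n))) ⟨c, hc⟩
      set M := Fintype.card ↥(BoxSet (n := n) (m := m) r d) with hM
      set t := c.2.2 with ht
      set s := r * M * 2 ^ t + r + N0 r d e + 1 with hs
      have hslb : r * M * 2 ^ t + r < s := by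
        rw [hs]
        exact Nat.lt_succ_of_le (Nat.le_add_right _ _)
      have hN0s : N0 r d e ≤ t + s := by
        rw [hs]
        exact le_trans (Nat.le_succ_of_le (Nat.le_add_left _ _)) (Nat.le_add_left _ t)
      have hlow := hilb_lower r d e hne hdg hconele s
      rcases Nat.eq_zero_or_pos r with hr0 | hrpos
      · have h0 := hr0case hr0 (t + s) hN0s
        have h1 : 1 ≤ (c.2.1.card + s - 1).choose s := Nat.choose_pos (by omega)
        omega
      · have hform := hilb_formula (K := K) r d e (z := t + s)
          (fun p hp => le_trans (box_mdeg_lt r d e hp).le hN0s)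
        have hup : hilb K e (monComplement K (purePowersF K n m r d)) (t + s) ≤
            M * (((t + s) + r - 1).choose (r - 1)) := by
          rw [hform]
          have hbound : ∀ x : ↥(BoxSet (n := n) (m := m) r d),
              ((Finset.univ.filter fun i : Fin n => ¬ ((i : ℕ) < n - r)).card +
                ((t + s) - mdeg e x.1) - 1).choose ((t + s) - mdeg e x.1) ≤
              ((t + s) + r - 1).choose (r - 1) := by
            intro x
            set sx := (t + s) - mdeg e x.1 with hsx
            rw [hcardhi]
            have hsym : (r + sx - 1).choose sx = (r + sx - 1).choose (r - 1) := by
              have h2 : sx ≤ r + sx - 1 := by omega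
              have h3 := Nat.choose_symm h2
              rw [show r + sx - 1 - sx = r - 1 by omega] at h3
              exact h3.symm
            rw [hsym]
            exact Nat.choose_le_choose (r - 1) (by omega)
          calc ∑ x : ↥(BoxSet (n := n) (m := m) r d),
              ((Finset.univ.filter fun i : Fin n => ¬ ((i : ℕ) < n - r)).card +
                ((t + s) - mdeg e x.1) - 1).choose ((t + s) - mdeg e x.1)
              ≤ Finset.univ.card • (((t + s) + r - 1).choose (r - 1)) :=
                Finset.sum_le_card_nsmul _ _ _ (fun x _ => hbound x)
            _ = M * (((t + s) + r - 1).choose (r - 1)) := by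
                rw [Finset.card_univ, smul_eq_mul]
        have hlow2 : (s + r).choose r ≤ (c.2.1.card + s - 1).choose s := by
          have h1 : (s + r).choose r = (s + r).choose s := by
            rw [add_comm s r]
            exact Nat.choose_symm_add
          rw [h1]
          exact Nat.choose_le_choose s (by omega)
        have hkey := key_ineq M t hrpos hslb
        exact absurd (((hlow2.trans hlow).trans hup).trans_lt hkey) (lt_irrefl _)
    have hfilt : P.filter (fun c => k ≤ c.2.1.card) = ∅ :=
      Finset.filter_eq_empty_iff.mpr main
    unfold macaulay
    rw [hfilt, Finset.sup_empty]
    simpa using Nat.zero_le D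
end
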